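/- arXiv:1602.03508 — 11 statements merged into one kernel-verified Lean document; each statement's English description precedes it below -/
import Mathlib

section
/- If the energy-saving problem (P) admits an optimal solution, then it admits an optimal solution (α, π) in which at most |K| + |B| + 1 patterns are active, i.e. |{ i ∈ I : π_i > 0 }| ≤ |K| + |B| + 1. -/
open Finset

/-- Membership in the constraint set `X`. -/
def memX {K B I : Type*} [Fintype K] [Fintype I]
    (α : K → B → I → ℝ) (π : I → ℝ) : Prop :=
  (∀ k b i, 0 ≤ α k b i) ∧ (∀ i, 0 ≤ π i) ∧
    (∀ b i, ∑ k, α k b i ≤ π i) ∧ (∑ i, π i = 1)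

/-- Usage of base station `b`. -/
def ρ {K B I : Type*} [Fintype K] [Fintype I]
    (α : K → B → I → ℝ) (b : B) : ℝ :=
  ∑ k, ∑ i, α k b i

/-- Total network power consumption. -/
noncomputable def Ptot {K B I : Type*} [Fintype K] [Fintype B] [Fintype I]
    (P q : B → ℝ) (α : K → B → I → ℝ) : ℝ :=
  ∑ b, P b * ((1 - q b) * ρ α b + q b * (if ρ α b ≠ 0 then (1 : ℝ) else 0))

/-- Feasibility for the energy-saving problem (P). -/
def FeasP {K B I : Type*} [Fintype K] [Fintype B] [Fintype I]
    (r : K → B → I → ℝ) (d : K → ℝ) (α : K → B → I → ℝ) (π : I → ℝ) : Prop :=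
  memX α π ∧ ∀ k, d k ≤ ∑ i, ∑ b, α k b i * r k b i

/-- If the energy-saving problem (P) admits an optimal solution, then it admits an optimal
solution in which at most `|K| + |B| + 1` patterns are active. -/
theorem stmt_0 {K B I : Type*} [Fintype K] [Fintype B] [Fintype I]
    [Nonempty K] [Nonempty B] [Nonempty I]
    (P q : B → ℝ) (hP : ∀ b, 0 < P b) (hq : ∀ b, 0 < q b ∧ q b ≤ 1)
    (r : K → B → I → ℝ) (hr : ∀ k b i, 0 ≤ r k b i) (d : K → ℝ)
    (hopt : ∃ α π, FeasP r d α π ∧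
      ∀ α' π', FeasP r d α' π' → Ptot P q α ≤ Ptot P q α') :
    ∃ α π, FeasP r d α π ∧
      (∀ α' π', FeasP r d α' π' → Ptot P q α ≤ Ptot P q α') ∧
      ({i : I | 0 < π i}.toFinset.card ≤ Fintype.card K + Fintype.card B + 1) := by
  classical
  obtain ⟨α, π, ⟨⟨hαnn, hπnn, hcol, htot⟩, hdem⟩, hopt⟩ := hopt
  -- active patterns
  set S : Finset I := Finset.univ.filter (fun i => 0 < π i) with hSdef
  have hmemS : ∀ i, i ∈ S ↔ 0 < π i := by intro i; simp [hSdef]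
  have hπz : ∀ i, i ∉ S → π i = 0 := by
    intro i hi
    have h1 : ¬ 0 < π i := fun h => hi ((hmemS i).2 h)
    linarith [hπnn i]
  have hαz : ∀ k b i, i ∉ S → α k b i = 0 := by
    intro k b i hi
    have h1 : α k b i ≤ ∑ k', α k' b i :=
      Finset.single_le_sum (fun k' _ => hαnn k' b i) (Finset.mem_univ k)
    have h2 := hcol b i
    have h3 := hπz i hi
    have h4 := hαnn k b i
    linarith
  have hStot : ∑ i ∈ S, π i = 1 := by
    rw [Finset.sum_subset (Finset.subset_univ S) (fun i _ hi => hπz i hi)]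
    exact htot
  -- normalized per-pattern points
  set p : I → (K → ℝ) × (B → ℝ) :=
    fun i => (fun k => ∑ b, α k b i / π i * r k b i, fun b => ∑ k, α k b i / π i) with hpdef
  -- the optimal aggregate lies in the convex hull of the active points
  have hx : S.centerMass π p ∈ convexHull ℝ (p '' ↑S) :=
    S.centerMass_mem_convexHull (fun i _ => hπnn i) (by rw [hStot]; norm_num)
      (fun i hi => ⟨i, hi, rfl⟩)
  rw [convexHull_eq_union] at hx
  simp only [Set.mem_iUnion] at hx
  obtain ⟨t, hts, hai, hxt⟩ := hx
  rw [Finset.convexHull_eq] at hxt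
  obtain ⟨w, hw0, hw1, hwx⟩ := hxt
  -- representative choice
  set g : (K → ℝ) × (B → ℝ) → I :=
    fun y => if h : ∃ i, i ∈ S ∧ p i = y then h.choose else Classical.arbitrary I with hgdef
  have hrep : ∀ y ∈ t, ∃ i, i ∈ S ∧ p i = y := by
    intro y hy
    obtain ⟨i, hi, hpi⟩ := hts hy
    exact ⟨i, hi, hpi⟩
  have hgS : ∀ y ∈ t, g y ∈ S := by
    intro y hy
    have h := hrep y hy
    simp only [hgdef, dif_pos h]
    exact h.choose_spec.1
  have hgp : ∀ y ∈ t, p (g y) = y := by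
    intro y hy
    have h := hrep y hy
    simp only [hgdef, dif_pos h]
    exact h.choose_spec.2
  have hginj : ∀ y ∈ t, ∀ y' ∈ t, g y = g y' → y = y' := by
    intro y hy y' hy' h
    rw [← hgp y hy, ← hgp y' hy', h]
  set T : Finset I := t.image g with hTdef
  have hTS : ∀ i ∈ T, i ∈ S := by
    intro i hi
    obtain ⟨y, hy, rfl⟩ := Finset.mem_image.mp hi
    exact hgS y hy
  -- new weights
  set π' : I → ℝ := fun i => if i ∈ T then w (p i) else 0 with hπ'def
  have hπ'z : ∀ i, i ∉ T → π' i = 0 := by intro i hi; simp [hπ'def, hi]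
  have hπ'nn : ∀ i, 0 ≤ π' i := by
    intro i
    by_cases h : i ∈ T
    · obtain ⟨y, hy, rfl⟩ := Finset.mem_image.mp h
      simp only [hπ'def, if_pos h, hgp y hy]
      exact hw0 y hy
    · simp [hπ'def, h]
  -- transfer of sums
  have htrans : ∀ (F : I → ℝ), ∑ i, π' i * F i = ∑ y ∈ t, w y * F (g y) := by
    intro F
    have h1 : ∑ i, π' i * F i = ∑ i ∈ T, π' i * F i :=
      (Finset.sum_subset (Finset.subset_univ T)
        (fun i _ hi => by rw [hπ'z i hi, zero_mul])).symm
    rw [h1, hTdef, Finset.sum_image hginj]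
    refine Finset.sum_congr rfl fun y hy => ?_
    have hmem : g y ∈ T := Finset.mem_image_of_mem g hy
    simp only [hπ'def, if_pos hmem, hgp y hy]
  have hπ'tot : ∑ i, π' i = 1 := by
    have := htrans (fun _ => 1)
    simpa using this.trans (by simpa using hw1)
  -- the two center-of-mass representations agree
  have hkey : ∑ y ∈ t, w y • y = ∑ i ∈ S, π i • p i := by
    have e1 := Finset.centerMass_eq_of_sum_1 t id hw1
    have e2 := Finset.centerMass_eq_of_sum_1 S p hStot
    rw [e1, e2] at hwx
    simpa using hwx
  have hcomp1 : ∀ k, ∑ i, π' i * (p i).1 k = ∑ i ∈ S, π i * (p i).1 k := by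
    intro k
    have h1 := htrans (fun i => (p i).1 k)
    have h2 : ∑ y ∈ t, w y * ((p (g y)).1 k) = ∑ y ∈ t, w y * (y.1 k) :=
      Finset.sum_congr rfl fun y hy => by rw [hgp y hy]
    have h3 := congrArg (fun z : (K → ℝ) × (B → ℝ) => z.1 k) hkey
    simp only [Prod.fst_sum, Prod.smul_fst, Finset.sum_apply, Pi.smul_apply,
      smul_eq_mul] at h3
    rw [h1, h2, h3]
  have hcomp2 : ∀ b, ∑ i, π' i * (p i).2 b = ∑ i ∈ S, π i * (p i).2 b := by
    intro b
    have h1 := htrans (fun i => (p i).2 b)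
    have h2 : ∑ y ∈ t, w y * ((p (g y)).2 b) = ∑ y ∈ t, w y * (y.2 b) :=
      Finset.sum_congr rfl fun y hy => by rw [hgp y hy]
    have h3 := congrArg (fun z : (K → ℝ) × (B → ℝ) => z.2 b) hkey
    simp only [Prod.snd_sum, Prod.smul_snd, Finset.sum_apply, Pi.smul_apply,
      smul_eq_mul] at h3
    rw [h1, h2, h3]
  -- new allocation
  set α' : K → B → I → ℝ := fun k b i => π' i * (α k b i / π i) with hα'def
  have hπpos : ∀ i ∈ S, 0 < π i := fun i hi => (hmemS i).1 hi
  -- identities on S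
  have hid1 : ∀ k, ∀ i ∈ S, π i * (p i).1 k = ∑ b, α k b i * r k b i := by
    intro k i hi
    have hne : π i ≠ 0 := ne_of_gt (hπpos i hi)
    simp only [hpdef]
    rw [Finset.mul_sum]
    refine Finset.sum_congr rfl fun b _ => ?_
    field_simp
  have hid2 : ∀ b, ∀ i ∈ S, π i * (p i).2 b = ∑ k, α k b i := by
    intro b i hi
    have hne : π i ≠ 0 := ne_of_gt (hπpos i hi)
    simp only [hpdef]
    rw [Finset.mul_sum]
    refine Finset.sum_congr rfl fun k _ => ?_
    field_simp
  -- aggregate identities for α'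
  have hagg1 : ∀ k, ∑ i, ∑ b, α' k b i * r k b i = ∑ i, ∑ b, α k b i * r k b i := by
    intro k
    have l1 : ∑ i, ∑ b, α' k b i * r k b i = ∑ i, π' i * (p i).1 k := by
      refine Finset.sum_congr rfl fun i _ => ?_
      simp only [hα'def, hpdef, Finset.mul_sum]
      refine Finset.sum_congr rfl fun b _ => ?_
      ring
    have l2 : ∑ i ∈ S, π i * (p i).1 k = ∑ i, ∑ b, α k b i * r k b i := by
      rw [Finset.sum_congr rfl (hid1 k)]
      refine Finset.sum_subset (Finset.subset_univ S) fun i _ hi => ?_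
      refine Finset.sum_eq_zero fun b _ => ?_
      rw [hαz k b i hi, zero_mul]
    rw [l1, hcomp1 k, l2]
  have hagg2 : ∀ b, ∑ i, ∑ k, α' k b i = ∑ i, ∑ k, α k b i := by
    intro b
    have l1 : ∑ i, ∑ k, α' k b i = ∑ i, π' i * (p i).2 b := by
      refine Finset.sum_congr rfl fun i _ => ?_
      simp only [hα'def, hpdef, Finset.mul_sum]
    have l2 : ∑ i ∈ S, π i * (p i).2 b = ∑ i, ∑ k, α k b i := by
      rw [Finset.sum_congr rfl (hid2 b)]
      refine Finset.sum_subset (Finset.subset_univ S) fun i _ hi => ?_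
      exact Finset.sum_eq_zero fun k _ => hαz k b i hi
    rw [l1, hcomp2 b, l2]
  -- usages coincide
  have hρ : ∀ b, ρ α' b = ρ α b := by
    intro b
    simp only [ρ]
    rw [Finset.sum_comm, hagg2 b, Finset.sum_comm]
  have hPtot : Ptot P q α' = Ptot P q α := by
    simp only [Ptot]
    exact Finset.sum_congr rfl fun b _ => by rw [hρ b]
  -- feasibility of the new pair
  have hfeas' : FeasP r d α' π' := by
    refine ⟨⟨fun k b i => mul_nonneg (hπ'nn i) (div_nonneg (hαnn k b i) (hπnn i)),
      hπ'nn, ?_, hπ'tot⟩, ?_⟩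
    · intro b i
      have hsum : ∑ k, α' k b i = π' i * ((∑ k, α k b i) / π i) := by
        rw [Finset.sum_div, Finset.mul_sum]
      by_cases h : i ∈ T
      · have hiS := hTS i h
        have hpos := hπpos i hiS
        have hle : (∑ k, α k b i) / π i ≤ 1 := (div_le_one hpos).2 (hcol b i)
        calc ∑ k, α' k b i = π' i * ((∑ k, α k b i) / π i) := hsum
          _ ≤ π' i * 1 := by
              exact mul_le_mul_of_nonneg_left hle (hπ'nn i)
          _ = π' i := mul_one _
      · rw [hsum, hπ'z i h, zero_mul]
    · intro k
      rw [hagg1 k]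
      exact hdem k
  refine ⟨α', π', hfeas', fun α'' π'' h'' => hPtot ▸ hopt α'' π'' h'', ?_⟩
  -- cardinality bound
  have hsub : {i : I | 0 < π' i}.toFinset ⊆ T := by
    intro i hi
    rw [Set.mem_toFinset, Set.mem_setOf_eq] at hi
    by_contra hc
    rw [hπ'z i hc] at hi
    exact lt_irrefl 0 hi
  have hcardT : T.card ≤ t.card := Finset.card_image_le
  have hcardt : t.card ≤ Fintype.card K + Fintype.card B + 1 := by
    have h1 : Fintype.card ↥t ≤
        Module.finrank ℝ (vectorSpan ℝ (Set.range ((↑) : t → (K → ℝ) × (B → ℝ)))) + 1 :=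
      hai.card_le_finrank_succ
    have h2 : Module.finrank ℝ (vectorSpan ℝ (Set.range ((↑) : t → (K → ℝ) × (B → ℝ)))) ≤
        Module.finrank ℝ ((K → ℝ) × (B → ℝ)) := Submodule.finrank_le _
    have h3 : Module.finrank ℝ ((K → ℝ) × (B → ℝ)) = Fintype.card K + Fintype.card B := by
      rw [Module.finrank_prod, Module.finrank_pi, Module.finrank_pi]
    rw [Fintype.card_coe] at h1
    omega
  calc {i : I | 0 < π' i}.toFinset.card ≤ T.card := Finset.card_le_card hsub
    _ ≤ t.card := hcardT
    _ ≤ Fintype.card K + Fintype.card B + 1 := hcardt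
end

section
/- If the feasible set of the energy-saving problem (P) is nonempty, then the objective P^tot attains its minimum over the feasible set, i.e. (P) admits an optimal solution. -/
open Finset

/-- If the feasible set of the energy-saving problem (P) is nonempty, then the objective
`P^tot` attains its minimum over the feasible set, i.e. (P) admits an optimal solution. -/
theorem stmt_1 {K B I : Type*} [Fintype K] [Fintype B] [Fintype I]
    [Nonempty K] [Nonempty B] [Nonempty I]
    (P q : B → ℝ) (hP : ∀ b, 0 < P b) (hq : ∀ b, 0 < q b ∧ q b ≤ 1)
    (r : K → B → I → ℝ) (hr : ∀ k b i, 0 ≤ r k b i) (d : K → ℝ)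
    (hfeas : ∃ α π, FeasP r d α π) :
    ∃ α π, FeasP r d α π ∧
      ∀ α' π', FeasP r d α' π' → Ptot P q α ≤ Ptot P q α' := by
  classical
  -- The ambient space and the feasible set
  let E := (K → B → I → ℝ) × (I → ℝ)
  let Feas : Set E := {p | FeasP r d p.1 p.2}
  -- continuity of coordinate maps and of ρ
  have hcoord : ∀ (k : K) (b : B) (i : I), Continuous (fun p : E => p.1 k b i) := by
    intro k b i
    exact (continuous_apply i).comp (((continuous_apply b).comp
      ((continuous_apply k).comp continuous_fst)))
  have hπcoord : ∀ i : I, Continuous (fun p : E => p.2 i) :=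
    fun i => (continuous_apply i).comp continuous_snd
  have hρc : ∀ b : B, Continuous (fun p : E => ρ p.1 b) := by
    intro b
    unfold ρ
    exact continuous_finset_sum _ fun k _ =>
      continuous_finset_sum _ fun i _ => hcoord k b i
  -- ρ is nonnegative on Feas
  have hρnn : ∀ p : E, p ∈ Feas → ∀ b, 0 ≤ ρ p.1 b := by
    intro p hp b
    exact Finset.sum_nonneg fun k _ => Finset.sum_nonneg fun i _ => hp.1.1 k b i
  -- Feas is closed
  have hFeasClosed : IsClosed Feas := by
    have : Feas = (⋂ k, ⋂ b, ⋂ i, {p : E | 0 ≤ p.1 k b i}) ∩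
        ((⋂ i, {p : E | 0 ≤ p.2 i}) ∩
        ((⋂ b, ⋂ i, {p : E | ∑ k, p.1 k b i ≤ p.2 i}) ∩
        ({p : E | ∑ i, p.2 i = 1} ∩
        (⋂ k, {p : E | d k ≤ ∑ i, ∑ b, p.1 k b i * r k b i})))) := by
      ext p
      simp only [Set.mem_inter_iff, Set.mem_iInter, Set.mem_setOf_eq]
      constructor
      · rintro ⟨⟨h1, h2, h3, h4⟩, h5⟩
        exact ⟨h1, h2, h3, h4, h5⟩
      · rintro ⟨h1, h2, h3, h4, h5⟩
        exact ⟨⟨h1, h2, h3, h4⟩, h5⟩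
    rw [this]
    have c1 : IsClosed (⋂ k, ⋂ b, ⋂ i, {p : E | 0 ≤ p.1 k b i}) :=
      isClosed_iInter fun k => isClosed_iInter fun b => isClosed_iInter fun i =>
        isClosed_le continuous_const (hcoord k b i)
    have c2 : IsClosed (⋂ i, {p : E | 0 ≤ p.2 i}) :=
      isClosed_iInter fun i => isClosed_le continuous_const (hπcoord i)
    have c3 : IsClosed (⋂ b, ⋂ i, {p : E | ∑ k, p.1 k b i ≤ p.2 i}) :=
      isClosed_iInter fun b => isClosed_iInter fun i =>
        isClosed_le (continuous_finset_sum _ fun k _ => hcoord k b i) (hπcoord i)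
    have c4 : IsClosed {p : E | ∑ i, p.2 i = 1} :=
      isClosed_eq (continuous_finset_sum _ fun i _ => hπcoord i) continuous_const
    have c5 : IsClosed (⋂ k, {p : E | d k ≤ ∑ i, ∑ b, p.1 k b i * r k b i}) :=
      isClosed_iInter fun k => isClosed_le continuous_const
        (continuous_finset_sum _ fun i _ => continuous_finset_sum _ fun b _ =>
          (hcoord k b i).mul continuous_const)
    exact c1.inter (c2.inter (c3.inter (c4.inter c5)))
  -- Feas is compact: it is a closed subset of a compact box
  have hFeasCompact : IsCompact Feas := by
    have hbox : IsCompact ((Set.univ.pi fun _ : K => Set.univ.pi fun _ : B =>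
        Set.univ.pi fun _ : I => Set.Icc (0 : ℝ) 1) ×ˢ
        (Set.univ.pi fun _ : I => Set.Icc (0 : ℝ) 1)) :=
      (isCompact_univ_pi fun _ => isCompact_univ_pi fun _ =>
        isCompact_univ_pi fun _ => isCompact_Icc).prod
        (isCompact_univ_pi fun _ => isCompact_Icc)
    refine IsCompact.of_isClosed_subset hbox hFeasClosed ?_
    rintro ⟨α, π⟩ hp
    obtain ⟨⟨h1, h2, h3, h4⟩, _⟩ := hp
    have hπle : ∀ i, π i ≤ 1 := by
      intro i
      calc π i = ∑ j ∈ {i}, π j := by simp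
        _ ≤ ∑ j, π j := Finset.sum_le_sum_of_subset_of_nonneg (Finset.subset_univ _)
            (fun j _ _ => h2 j)
        _ = 1 := h4
    have hαle : ∀ k b i, α k b i ≤ 1 := by
      intro k b i
      calc α k b i = ∑ k' ∈ {k}, α k' b i := by simp
        _ ≤ ∑ k', α k' b i := Finset.sum_le_sum_of_subset_of_nonneg
            (Finset.subset_univ _) (fun k' _ _ => h1 k' b i)
        _ ≤ π i := h3 b i
        _ ≤ 1 := hπle i
    constructor
    · intro k _ b _ i _
      exact ⟨h1 k b i, hαle k b i⟩
    · intro i _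
      exact ⟨h2 i, hπle i⟩
  -- The slices F S and continuous surrogates g S
  let F : Finset B → Set E := fun S => Feas ∩ {p : E | ∀ b ∉ S, ρ p.1 b = 0}
  let g : Finset B → E → ℝ := fun S p =>
    ∑ b, P b * ((1 - q b) * ρ p.1 b + q b * (if b ∈ S then (1 : ℝ) else 0))
  have hgc : ∀ S, Continuous (g S) := by
    intro S
    exact continuous_finset_sum _ fun b _ =>
      continuous_const.mul ((continuous_const.mul (hρc b)).add continuous_const)
  have hFcompact : ∀ S, IsCompact (F S) := by
    intro S
    refine hFeasCompact.inter_right ?_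
    have : {p : E | ∀ b ∉ S, ρ p.1 b = 0} = ⋂ b, {p : E | b ∉ S → ρ p.1 b = 0} := by
      ext p; simp
    rw [this]
    refine isClosed_iInter fun b => ?_
    by_cases hb : b ∈ S
    · have : {p : E | b ∉ S → ρ p.1 b = 0} = Set.univ := by
        ext p; simp [hb]
      rw [this]; exact isClosed_univ
    · have : {p : E | b ∉ S → ρ p.1 b = 0} = {p : E | ρ p.1 b = 0} := by
        ext p; simp [hb]
      rw [this]; exact isClosed_eq (hρc b) continuous_const
  -- Ptot ≤ g S on F S
  have hle : ∀ S, ∀ p ∈ F S, Ptot P q p.1 ≤ g S p := by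
    intro S p hp
    refine Finset.sum_le_sum fun b _ => ?_
    have hPb := (hP b).le
    refine mul_le_mul_of_nonneg_left ?_ hPb
    refine add_le_add le_rfl ?_
    refine mul_le_mul_of_nonneg_left ?_ (hq b).1.le
    by_cases h : ρ p.1 b ≠ 0
    · have hbS : b ∈ S := by
        by_contra hbS
        exact h (hp.2 b hbS)
      simp [h, hbS]
    · simp only [h, if_false]
      by_cases hbS : b ∈ S <;> simp [hbS]
  -- Ptot = g (support) everywhere
  have heq : ∀ p : E, Ptot P q p.1 = g (Finset.univ.filter fun b => ρ p.1 b ≠ 0) p := by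
    intro p
    simp only [Ptot, g]
    refine Finset.sum_congr rfl fun b _ => ?_
    by_cases h : ρ p.1 b ≠ 0 <;> simp [h]
  -- feasible points lie in the slice of their own support
  have hmemF : ∀ p : E, p ∈ Feas → p ∈ F (Finset.univ.filter fun b => ρ p.1 b ≠ 0) := by
    intro p hp
    refine ⟨hp, fun b hb => ?_⟩
    simp only [Finset.mem_filter, Finset.mem_univ, true_and, not_not] at hb
    exact hb
  -- choose a minimizer of g S on each nonempty slice
  have hsel : ∀ S : Finset B, ∃ x : E, (F S).Nonempty →
      x ∈ F S ∧ ∀ y ∈ F S, g S x ≤ g S y := by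
    intro S
    by_cases hne : (F S).Nonempty
    · obtain ⟨x, hx, hmin⟩ := (hFcompact S).exists_isMinOn hne (hgc S).continuousOn
      exact ⟨x, fun _ => ⟨hx, fun y hy => hmin hy⟩⟩
    · exact ⟨Classical.arbitrary E, fun h => absurd h hne⟩
  choose xS hxS using hsel
  -- minimize over the (finitely many) nonempty slices
  let T : Finset (Finset B) := Finset.univ.filter fun S => (F S).Nonempty
  obtain ⟨α₀, π₀, hfeas0⟩ := hfeas
  have hT : T.Nonempty := by
    refine ⟨Finset.univ.filter fun b => ρ α₀ b ≠ 0, ?_⟩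
    simp only [T, Finset.mem_filter, Finset.mem_univ, true_and]
    exact ⟨(α₀, π₀), hmemF (α₀, π₀) hfeas0⟩
  obtain ⟨S₀, hS₀T, hS₀min⟩ := T.exists_min_image (fun S => g S (xS S)) hT
  have hS₀ne : (F S₀).Nonempty := by
    simpa [T] using hS₀T
  obtain ⟨hxmem, hxmin⟩ := hxS S₀ hS₀ne
  refine ⟨(xS S₀).1, (xS S₀).2, hxmem.1, ?_⟩
  intro α' π' hp'
  set p' : E := (α', π') with hp'def
  have hp'Feas : p' ∈ Feas := hp'
  set S' : Finset B := Finset.univ.filter fun b => ρ α' b ≠ 0 with hS'def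
  have hp'F : p' ∈ F S' := hmemF p' hp'Feas
  have hS'T : S' ∈ T := by
    simp only [T, Finset.mem_filter, Finset.mem_univ, true_and]
    exact ⟨p', hp'F⟩
  obtain ⟨hx'mem, hx'min⟩ := hxS S' ⟨p', hp'F⟩
  calc Ptot P q (xS S₀).1 ≤ g S₀ (xS S₀) := hle S₀ (xS S₀) hxmem
    _ ≤ g S' (xS S') := hS₀min S' hS'T
    _ ≤ g S' p' := hx'min p' hp'F
    _ = Ptot P q α' := (heq p').symm
end

section
/- Assume d_k > 0 for all k ∈ K, set D = ∑_{k ∈ K} d_k and β_k = d_k / D. Define R* as the supremum of all R ∈ ℝ for which there exists (α, π) ∈ X with β_k R ≤ ∑_{i ∈ I} ∑_{b ∈ B} α_{kbi} r_{kbi} for all k ∈ K. Then this supremum is finite and attained, and the energy-saving problem (P) has a nonempty feasible set if and only if R* ≥ D. -/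
open Finset

/-- Feasibility test via rate balancing: the supremum `R*` of achievable balanced sum rates
is finite and attained, and problem (P) is feasible iff `R* ≥ D`. -/
theorem stmt_2 {K B I : Type*} [Fintype K] [Fintype B] [Fintype I]
    [Nonempty K] [Nonempty B] [Nonempty I]
    (r : K → B → I → ℝ) (hr : ∀ k b i, 0 ≤ r k b i)
    (d : K → ℝ) (hd : ∀ k, 0 < d k)
    (D : ℝ) (hD : D = ∑ k, d k)
    (β : K → ℝ) (hβ : ∀ k, β k = d k / D) :
    ∃ Rstar : ℝ,
      IsGreatest {R : ℝ | ∃ α π, memX α π ∧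
          ∀ k, β k * R ≤ ∑ i, ∑ b, α k b i * r k b i} Rstar ∧
      ((∃ α π, memX α π ∧ ∀ k, d k ≤ ∑ i, ∑ b, α k b i * r k b i) ↔ D ≤ Rstar) := by
  classical
  have hDpos : 0 < D := by
    rw [hD]; exact Finset.sum_pos (fun k _ => hd k) Finset.univ_nonempty
  have hβpos : ∀ k, 0 < β k := fun k => by rw [hβ]; exact div_pos (hd k) hDpos
  have hdβ : ∀ k, d k = β k * D := fun k => by
    rw [hβ]; field_simp
  -- the ambient space
  set P := (K → B → I → ℝ) × (I → ℝ)
  set Xs : Set P := {p | memX p.1 p.2} with hXs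
  -- the per-user normalized rate and its min
  set g : K → P → ℝ := fun k p => (∑ i, ∑ b, p.1 k b i * r k b i) / β k with hg
  set f : P → ℝ := fun p => Finset.univ.inf' Finset.univ_nonempty (fun k => g k p) with hf
  have hgc : ∀ k, Continuous (g k) := by
    intro k
    apply Continuous.div_const
    apply continuous_finset_sum; intro i _
    apply continuous_finset_sum; intro b _
    exact (((continuous_apply i).comp ((continuous_apply b).comp
      ((continuous_apply k).comp continuous_fst)) : Continuous fun p : P => p.1 k b i)).mul continuous_const
  have hfc : Continuous f := by
    exact Continuous.finset_inf'_apply Finset.univ_nonempty (fun k _ => hgc k)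
  -- X is nonempty
  have hXne : Xs.Nonempty := by
    refine ⟨(fun _ _ _ => 0, fun _ => (Fintype.card I : ℝ)⁻¹), ?_⟩
    have hcard : (0:ℝ) < (Fintype.card I : ℝ) := by
      exact_mod_cast Fintype.card_pos
    refine ⟨fun _ _ _ => le_refl 0, fun _ => by positivity, ?_, ?_⟩
    · intro b i; simp
    · simp [Finset.card_univ]
  -- X is closed
  have hXcl : IsClosed Xs := by
    have h1 : IsClosed {p : P | ∀ k b i, 0 ≤ p.1 k b i} := by
      simp only [Set.setOf_forall]
      exact isClosed_iInter fun k => isClosed_iInter fun b => isClosed_iInter fun i =>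
        isClosed_le continuous_const
          ((continuous_apply i).comp ((continuous_apply b).comp
            ((continuous_apply k).comp continuous_fst)))
    have h2 : IsClosed {p : P | ∀ i, 0 ≤ p.2 i} := by
      simp only [Set.setOf_forall]
      exact isClosed_iInter fun i =>
        isClosed_le continuous_const ((continuous_apply i).comp continuous_snd)
    have h3 : IsClosed {p : P | ∀ b i, ∑ k, p.1 k b i ≤ p.2 i} := by
      simp only [Set.setOf_forall]
      exact isClosed_iInter fun b => isClosed_iInter fun i =>
        isClosed_le
          (continuous_finset_sum _ fun k _ =>
            (continuous_apply i).comp ((continuous_apply b).comp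
              ((continuous_apply k).comp continuous_fst)))
          ((continuous_apply i).comp continuous_snd)
    have h4 : IsClosed {p : P | ∑ i, p.2 i = 1} := by
      exact isClosed_eq (continuous_finset_sum _ fun i _ =>
        (continuous_apply i).comp continuous_snd) continuous_const
    have : Xs = {p : P | ∀ k b i, 0 ≤ p.1 k b i} ∩ {p : P | ∀ i, 0 ≤ p.2 i} ∩
        {p : P | ∀ b i, ∑ k, p.1 k b i ≤ p.2 i} ∩ {p : P | ∑ i, p.2 i = 1} := by
      ext p
      simp only [hXs, Set.mem_setOf_eq, Set.mem_inter_iff, memX]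
      tauto
    rw [this]
    exact ((h1.inter h2).inter h3).inter h4
  -- X is bounded: contained in Icc
  have hXsub : Xs ⊆ Set.Icc ((fun _ _ _ => 0, fun _ => 0) : P) ((fun _ _ _ => 1, fun _ => 1) : P) := by
    rintro ⟨a, pp⟩ ⟨ha, hp, hs, ht⟩
    have hπ1 : ∀ i, pp i ≤ 1 := by
      intro i
      calc pp i ≤ ∑ j, pp j := Finset.single_le_sum (fun j _ => hp j) (Finset.mem_univ i)
        _ = 1 := ht
    constructor
    · exact ⟨fun k b i => ha k b i, fun i => hp i⟩
    · constructor
      · intro k b i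
        calc a k b i ≤ ∑ k', a k' b i :=
              Finset.single_le_sum (fun k' _ => ha k' b i) (Finset.mem_univ k)
          _ ≤ pp i := hs b i
          _ ≤ 1 := hπ1 i
      · exact fun i => hπ1 i
  have hXcp : IsCompact Xs := (isCompact_Icc).of_isClosed_subset hXcl hXsub
  obtain ⟨x, hxX, hmax⟩ := hXcp.exists_isMaxOn hXne hfc.continuousOn
  refine ⟨f x, ⟨⟨x.1, x.2, hxX, ?_⟩, ?_⟩, ?_, ?_⟩
  · -- f x is achievable
    intro k
    have h1 : f x ≤ g k x := Finset.inf'_le _ (Finset.mem_univ k)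
    rw [hg] at h1
    have := (le_div_iff₀ (hβpos k)).mp h1
    linarith [this]
  · -- upper bound
    rintro R ⟨a, pp, hmem, hRk⟩
    have hy : (a, pp) ∈ Xs := hmem
    have hR : R ≤ f (a, pp) := by
      apply Finset.le_inf'
      intro k _
      rw [hg, le_div_iff₀ (hβpos k)]
      calc R * β k = β k * R := mul_comm _ _
        _ ≤ _ := hRk k
    exact hR.trans (hmax hy)
  · -- feasible → D ≤ Rstar
    rintro ⟨a, pp, hmem, hdk⟩
    have hy : (a, pp) ∈ Xs := hmem
    have hDf : D ≤ f (a, pp) := by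
      apply Finset.le_inf'
      intro k _
      rw [hg, le_div_iff₀ (hβpos k)]
      calc D * β k = d k := by rw [hdβ k]; ring
        _ ≤ _ := hdk k
    exact hDf.trans (hmax hy)
  · -- D ≤ Rstar → feasible
    intro hDR
    refine ⟨x.1, x.2, hxX, fun k => ?_⟩
    have h1 : f x ≤ g k x := Finset.inf'_le _ (Finset.mem_univ k)
    have h2 : D ≤ g k x := hDR.trans h1
    rw [hg, le_div_iff₀ (hβpos k)] at h2
    calc d k = D * β k := by rw [hdβ k]; ring
      _ ≤ _ := h2
end

section
/- Let β_k > 0 with ∑_{k ∈ K} β_k = 1 and r_{kbi} ≥ 0, and let Λ = { λ : K → ℝ : λ_k ≥ 0 for all k, ∑_{k ∈ K} λ_k = 1 }. Let R* be the maximum of R over all (α, π, R) with (α, π) ∈ X and β_k R ≤ ∑_{i ∈ I} ∑_{b ∈ B} α_{kbi} r_{kbi} for all k. Then strong duality holds: max_{λ ∈ Λ} min_{(α, π) ∈ X} ( − ∑_{k,b,i} α_{kbi} r_{kbi} λ_k / β_k ) = − R*, where both the outer maximum and the inner minima are attained. -/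
open Finset

/-- The Lagrangian objective of the dual of the rate balancing problem, for fixed
multipliers `λ`. -/
noncomputable def dualObj {K B I : Type*} [Fintype K] [Fintype B] [Fintype I]
    (r : K → B → I → ℝ) (β : K → ℝ) (lam : K → ℝ) (α : K → B → I → ℝ) : ℝ :=
  -∑ k, ∑ b, ∑ i, α k b i * r k b i * lam k / β k

section Aux

set_option linter.unusedSectionVars false
set_option linter.unusedVariables false

variable {K B I : Type*} [Fintype K] [Fintype B] [Fintype I]
  [Nonempty K] [Nonempty B] [Nonempty I]

private lemma inner_min (r : K → B → I → ℝ) (hr : ∀ k b i, 0 ≤ r k b i)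
    (β : K → ℝ) (hβpos : ∀ k, 0 < β k)
    (lam : K → ℝ) (hlam : ∀ k, 0 ≤ lam k) :
    ∃ m, IsLeast {v : ℝ | ∃ α π, memX α π ∧ v = dualObj r β lam α} m := by
  classical
  set c : K → B → I → ℝ := fun k b i => r k b i * lam k / β k with hc_def
  have hc : ∀ k b i, 0 ≤ c k b i := by
    intro k b i; simp only [hc_def]
    exact div_nonneg (mul_nonneg (hr k b i) (hlam k)) (hβpos k).le
  set s : B → I → ℝ := fun b i => univ.sup' univ_nonempty (fun k => c k b i) with hs_def
  have hs_le : ∀ k b i, c k b i ≤ s b i := by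
    intro k b i; simp only [hs_def]
    exact Finset.le_sup' (fun k => c k b i) (mem_univ k)
  have hs0 : ∀ b i, 0 ≤ s b i := fun b i =>
    (hc (Classical.arbitrary K) b i).trans (hs_le _ b i)
  set g : I → ℝ := fun i => ∑ b, s b i with hg_def
  set M : ℝ := univ.sup' univ_nonempty g with hM_def
  have hg_le : ∀ i, g i ≤ M := by
    intro i; simp only [hM_def]
    exact Finset.le_sup' g (mem_univ i)
  obtain ⟨i0, -, hi0⟩ := Finset.exists_mem_eq_sup' univ_nonempty g
  have hkb : ∀ b : B, ∃ k, s b i0 = c k b i0 := by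
    intro b
    obtain ⟨k, -, hk⟩ := Finset.exists_mem_eq_sup' univ_nonempty (fun k => c k b i0)
    exact ⟨k, by simp only [hs_def]; exact hk⟩
  choose kb hkb using hkb
  have hterm : ∀ (α : K → B → I → ℝ) (k : K) (b : B) (i : I),
      α k b i * r k b i * lam k / β k = α k b i * c k b i := by
    intro α k b i; simp only [hc_def]; ring
  have hsum_eq : ∀ (α : K → B → I → ℝ),
      ∑ k, ∑ b, ∑ i, α k b i * r k b i * lam k / β k
        = ∑ k, ∑ b, ∑ i, α k b i * c k b i := fun α =>
    Finset.sum_congr rfl fun k _ => Finset.sum_congr rfl fun b _ =>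
      Finset.sum_congr rfl fun i _ => hterm α k b i
  refine ⟨-M, ⟨fun k b i => if i = i0 ∧ k = kb b then 1 else 0,
      fun i => if i = i0 then 1 else 0, ⟨?_, ?_, ?_, ?_⟩, ?_⟩, ?_⟩
  · intro k b i; dsimp only; split <;> norm_num
  · intro i; dsimp only; split <;> norm_num
  · intro b i; dsimp only
    by_cases h : i = i0 <;> simp [h, ite_and, Finset.sum_ite_eq']
  · simp [Finset.sum_ite_eq']
  · -- value computation
    rw [dualObj, neg_inj]
    have h1 : ∑ k, ∑ b, ∑ i,
        (if i = i0 ∧ k = kb b then (1:ℝ) else 0) * r k b i * lam k / β k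
        = ∑ b, c (kb b) b i0 := by
      rw [hsum_eq]
      rw [Finset.sum_comm]
      refine Finset.sum_congr rfl fun b _ => ?_
      rw [Finset.sum_comm]
      simp [ite_and, ite_mul, Finset.sum_ite_eq']
    rw [h1]
    have h2 : ∀ b, c (kb b) b i0 = s b i0 := fun b => (hkb b).symm
    simp only [h2]
    rw [hM_def, hi0]
  · rintro v ⟨α, π, ⟨hα0, hπ0, hαπ, hπ1⟩, rfl⟩
    rw [dualObj, neg_le_neg_iff]
    have hre : ∑ k, ∑ b, ∑ i, α k b i * r k b i * lam k / β k
        = ∑ i, ∑ b, ∑ k, α k b i * c k b i := by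
      rw [hsum_eq]
      calc ∑ k, ∑ b, ∑ i, α k b i * c k b i
          = ∑ k, ∑ i, ∑ b, α k b i * c k b i :=
            Finset.sum_congr rfl fun k _ => Finset.sum_comm
        _ = ∑ i, ∑ k, ∑ b, α k b i * c k b i := Finset.sum_comm
        _ = ∑ i, ∑ b, ∑ k, α k b i * c k b i :=
            Finset.sum_congr rfl fun i _ => Finset.sum_comm
    rw [hre]
    have h1 : ∀ b i, ∑ k, α k b i * c k b i ≤ π i * s b i := by
      intro b i
      calc ∑ k, α k b i * c k b i ≤ ∑ k, α k b i * s b i :=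
            Finset.sum_le_sum fun k _ =>
              mul_le_mul_of_nonneg_left (hs_le k b i) (hα0 k b i)
        _ = (∑ k, α k b i) * s b i := (Finset.sum_mul _ _ _).symm
        _ ≤ π i * s b i := mul_le_mul_of_nonneg_right (hαπ b i) (hs0 b i)
    calc ∑ i, ∑ b, ∑ k, α k b i * c k b i
        ≤ ∑ i, ∑ b, π i * s b i :=
          Finset.sum_le_sum fun i _ => Finset.sum_le_sum fun b _ => h1 b i
      _ = ∑ i, π i * g i := by
          refine Finset.sum_congr rfl fun i _ => ?_
          rw [← Finset.mul_sum]
      _ ≤ ∑ i, π i * M :=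
          Finset.sum_le_sum fun i _ => mul_le_mul_of_nonneg_left (hg_le i) (hπ0 i)
      _ = M := by rw [← Finset.sum_mul, hπ1, one_mul]


private lemma sep_lam (r : K → B → I → ℝ) (hr : ∀ k b i, 0 ≤ r k b i)
    (β : K → ℝ) (hβpos : ∀ k, 0 < β k)
    (Rstar : ℝ)
    (hRstar : IsGreatest {R : ℝ | ∃ α π, memX α π ∧
        ∀ k, β k * R ≤ ∑ i, ∑ b, α k b i * r k b i} Rstar) :
    ∃ lam : K → ℝ, (∀ k, 0 ≤ lam k) ∧ (∑ k, lam k = 1) ∧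
      ∀ (α : K → B → I → ℝ) (π : I → ℝ), memX α π →
        ∑ k, (∑ i, ∑ b, α k b i * r k b i) * lam k / β k ≤ Rstar := by
  classical
  set S : (K → B → I → ℝ) → K → ℝ := fun α k => ∑ i, ∑ b, α k b i * r k b i with hS_def
  set D : Set (K → ℝ) :=
    {y | ∃ α π, memX α π ∧ ∀ k, y k ≤ S α k - β k * Rstar} with hD_def
  -- a trivial feasible point
  obtain ⟨i1⟩ := ‹Nonempty I›
  have hmem0 : memX (K := K) (B := B) (I := I) (fun _ _ _ => (0:ℝ)) (fun i => if i = i1 then 1 else 0) := by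
    refine ⟨fun _ _ _ => le_refl _, fun i => ?_, fun b i => ?_, ?_⟩
    · dsimp only; split <;> norm_num
    · simp; split <;> norm_num
    · simp [Finset.sum_ite_eq']
  have hDconv : Convex ℝ D := by
    rintro y1 ⟨α1, π1, ⟨h1a, h1b, h1c, h1d⟩, h1⟩ y2 ⟨α2, π2, ⟨h2a, h2b, h2c, h2d⟩, h2⟩
      a b ha hb hab
    refine ⟨fun k b' i => a * α1 k b' i + b * α2 k b' i,
      fun i => a * π1 i + b * π2 i, ⟨?_, ?_, ?_, ?_⟩, ?_⟩
    · intro k b' i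
      exact add_nonneg (mul_nonneg ha (h1a k b' i)) (mul_nonneg hb (h2a k b' i))
    · intro i
      exact add_nonneg (mul_nonneg ha (h1b i)) (mul_nonneg hb (h2b i))
    · intro b' i
      rw [Finset.sum_add_distrib]
      simp only [← Finset.mul_sum]
      exact add_le_add (mul_le_mul_of_nonneg_left (h1c b' i) ha)
        (mul_le_mul_of_nonneg_left (h2c b' i) hb)
    · rw [Finset.sum_add_distrib]
      simp only [← Finset.mul_sum, h1d, h2d]
      simpa using hab
    · intro k
      have hSlin : S (fun k b' i => a * α1 k b' i + b * α2 k b' i) k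
          = a * S α1 k + b * S α2 k := by
        simp only [hS_def, add_mul, Finset.sum_add_distrib, Finset.mul_sum, mul_assoc]
      have := add_le_add (mul_le_mul_of_nonneg_left (h1 k) ha)
        (mul_le_mul_of_nonneg_left (h2 k) hb)
      have hyk : (a • y1 + b • y2) k = a * y1 k + b * y2 k := rfl
      have h3 : a * (S α1 k - β k * Rstar) + b * (S α2 k - β k * Rstar)
          = a * S α1 k + b * S α2 k - β k * Rstar := by
        linear_combination (-(β k * Rstar)) * hab
      rw [hyk, hSlin]
      linarith [this, h3]
  have hsconv : Convex ℝ {y : K → ℝ | ∀ k, 0 < y k} := by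
    have : {y : K → ℝ | ∀ k, 0 < y k} = Set.pi Set.univ (fun _ => Set.Ioi (0:ℝ)) := by
      ext y; simp [Set.mem_pi]
    rw [this]
    exact convex_pi fun _ _ => convex_Ioi 0
  have hsopen : IsOpen {y : K → ℝ | ∀ k, 0 < y k} := by
    have : {y : K → ℝ | ∀ k, 0 < y k} = Set.pi Set.univ (fun _ => Set.Ioi (0:ℝ)) := by
      ext y; simp [Set.mem_pi]
    rw [this]
    exact isOpen_set_pi Set.finite_univ fun _ _ => isOpen_Ioi
  have hdisj : Disjoint {y : K → ℝ | ∀ k, 0 < y k} D := by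
    rw [Set.disjoint_left]
    rintro y hy ⟨α, π, hmem, hle⟩
    have hkey : ∀ k, β k * Rstar < S α k := by
      intro k
      have := hle k
      have := hy k
      linarith
    set ε : ℝ := univ.inf' univ_nonempty (fun k => (S α k - β k * Rstar) / β k) with hε
    have hεpos : 0 < ε := by
      rw [hε, Finset.lt_inf'_iff]
      intro k _
      exact div_pos (by linarith [hkey k]) (hβpos k)
    have hfeas : Rstar + ε ∈ {R : ℝ | ∃ α π, memX α π ∧
        ∀ k, β k * R ≤ ∑ i, ∑ b, α k b i * r k b i} := by
      refine ⟨α, π, hmem, fun k => ?_⟩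
      have h1 : ε ≤ (S α k - β k * Rstar) / β k := by
        rw [hε]; exact Finset.inf'_le _ (mem_univ k)
      have h2 : β k * ε ≤ S α k - β k * Rstar := by
        have := mul_le_mul_of_nonneg_left h1 (hβpos k).le
        rwa [mul_div_cancel₀ _ (hβpos k).ne'] at this
      have : β k * (Rstar + ε) ≤ S α k := by ring_nf; nlinarith [h2]
      simpa [hS_def] using this
    have := hRstar.2 hfeas
    linarith
  obtain ⟨f, u, hfs, hfD⟩ := geometric_hahn_banach_open hsconv hsopen hDconv hdisj
  -- representation of f
  have hrep : ∀ y : K → ℝ, f y = ∑ k, y k * f ((Pi.single k (1:ℝ) : K → ℝ)) := by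
    intro y
    have hy : y = ∑ k, y k • (Pi.single k (1:ℝ) : K → ℝ) := by
      ext j
      simp [Pi.single_apply, Finset.sum_ite_eq', mul_comm]
    calc f y = f (∑ k, y k • (Pi.single k (1:ℝ) : K → ℝ)) := by rw [← hy]
      _ = ∑ k, y k * f ((Pi.single k (1:ℝ) : K → ℝ)) := by
        rw [map_sum]
        exact Finset.sum_congr rfl fun k _ => by rw [map_smul]; rfl
  have hone : f (fun _ => (1:ℝ)) < u := hfs _ (fun k => one_pos)
  -- u is nonneg
  have hu0 : 0 ≤ u := by
    by_contra hu
    push_neg at hu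
    have h1 : f (fun _ => (1:ℝ)) < 0 := lt_trans hone hu
    set t : ℝ := u / f (fun _ => (1:ℝ)) with ht
    have htpos : 0 < t := div_pos_of_neg_of_neg hu h1
    have hmem : (t • fun _ => (1:ℝ)) ∈ {y : K → ℝ | ∀ k, 0 < y k} := by
      intro k; simpa using htpos
    have := hfs _ hmem
    rw [map_smul] at this
    have : t * f (fun _ => (1:ℝ)) < u := this
    rw [ht, div_mul_cancel₀ _ (ne_of_lt h1)] at this
    exact lt_irrefl u this
  -- each coordinate functional is nonpositive
  have hcoord : ∀ k, f ((Pi.single k (1:ℝ) : K → ℝ)) ≤ 0 := by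
    intro k
    by_contra hk
    push_neg at hk
    set t : ℝ := (u - f (fun _ => (1:ℝ))) / f ((Pi.single k (1:ℝ) : K → ℝ)) with ht
    have htpos : 0 < t := div_pos (by linarith) hk
    have hmem : ((fun _ => (1:ℝ)) + t • (Pi.single k (1:ℝ) : K → ℝ)) ∈ {y : K → ℝ | ∀ k, 0 < y k} := by
      intro j
      have : (0:ℝ) ≤ t * (Pi.single k (1:ℝ) : K → ℝ) j := by
        refine mul_nonneg htpos.le ?_
        rcases Pi.single_apply k (1:ℝ) j with _
        rw [Pi.single_apply]
        split <;> norm_num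
      have hval : (((fun _ => (1:ℝ)) + t • (Pi.single k (1:ℝ) : K → ℝ)) : K → ℝ) j = 1 + t * (Pi.single k (1:ℝ) : K → ℝ) j := rfl
      rw [hval]; linarith
    have := hfs _ hmem
    rw [map_add, map_smul] at this
    have heq : t * f ((Pi.single k (1:ℝ) : K → ℝ)) = u - f (fun _ => (1:ℝ)) := by
      rw [ht, div_mul_cancel₀ _ (ne_of_gt hk)]
    have : f (fun _ => (1:ℝ)) + t * f ((Pi.single k (1:ℝ) : K → ℝ)) < u := this
    rw [heq] at this
    linarith
  set lam0 : K → ℝ := fun k => -f ((Pi.single k (1:ℝ) : K → ℝ)) with hlam0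
  have hlam0nn : ∀ k, 0 ≤ lam0 k := fun k => neg_nonneg.2 (hcoord k)
  -- key inequality on D
  have hkeyD : ∀ y ∈ D, ∑ k, lam0 k * y k ≤ 0 := by
    intro y hy
    have h1 : u ≤ f y := hfD y hy
    have h2 : 0 ≤ f y := le_trans hu0 h1
    rw [hrep] at h2
    have : ∑ k, y k * f ((Pi.single k (1:ℝ) : K → ℝ)) = -∑ k, lam0 k * y k := by
      rw [← Finset.sum_neg_distrib]
      exact Finset.sum_congr rfl fun k _ => by rw [hlam0]; ring
    rw [this] at h2
    linarith
  -- lam0 is nonzero: there is k with lam0 k > 0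
  have hDne : (fun k => -(β k * Rstar)) ∈ D := by
    refine ⟨fun _ _ _ => 0, fun i => if i = i1 then 1 else 0, hmem0, fun k => ?_⟩
    simp [hS_def]
  have hlam0ne : ∃ k, 0 < lam0 k := by
    by_contra hno
    push_neg at hno
    have hzero : ∀ k, lam0 k = 0 := fun k => le_antisymm (hno k) (hlam0nn k)
    have hfzero : ∀ k, f ((Pi.single k (1:ℝ) : K → ℝ)) = 0 := by
      intro k
      have h := hzero k
      simp only [hlam0, neg_eq_zero] at h
      exact h
    have h1 : f (fun _ => (1:ℝ)) = 0 := by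
      rw [hrep]; simp [hfzero]
    have h2 : u ≤ f (fun k => -(β k * Rstar)) := hfD _ hDne
    have h3 : f (fun _ => (1:ℝ)) < u := hone
    have h4 : f (fun k => -(β k * Rstar)) = 0 := by
      rw [hrep]; simp [hfzero]
    rw [h1] at h3
    rw [h4] at h2
    linarith
  obtain ⟨k0, hk0⟩ := hlam0ne
  set s' : ℝ := ∑ k, lam0 k * β k with hs'
  have hs'pos : 0 < s' := by
    rw [hs']
    refine Finset.sum_pos' (fun k _ => mul_nonneg (hlam0nn k) (hβpos k).le) ?_
    exact ⟨k0, mem_univ k0, mul_pos hk0 (hβpos k0)⟩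
  refine ⟨fun k => lam0 k * β k / s', ?_, ?_, ?_⟩
  · intro k
    exact div_nonneg (mul_nonneg (hlam0nn k) (hβpos k).le) hs'pos.le
  · rw [← Finset.sum_div, ← hs', div_self hs'pos.ne']
  · intro α π hmemαπ
    have hyD : (fun k => S α k - β k * Rstar) ∈ D := ⟨α, π, hmemαπ, fun k => le_refl _⟩
    have hkey := hkeyD _ hyD
    have hexp : ∑ k, lam0 k * (S α k - β k * Rstar)
        = ∑ k, lam0 k * S α k - Rstar * s' := by
      rw [hs', Finset.mul_sum, ← Finset.sum_sub_distrib]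
      exact Finset.sum_congr rfl fun k _ => by ring
    rw [hexp] at hkey
    have hfin : ∑ k, (∑ i, ∑ b, α k b i * r k b i) * (lam0 k * β k / s') / β k
        = (∑ k, lam0 k * S α k) / s' := by
      rw [Finset.sum_div]
      refine Finset.sum_congr rfl fun k _ => ?_
      have hβ : β k ≠ 0 := (hβpos k).ne'
      have hSk : S α k = ∑ i, ∑ b, α k b i * r k b i := by rw [hS_def]
      rw [hSk]
      field_simp
    rw [hfin]
    rw [div_le_iff₀ hs'pos]
    linarith
end Aux

/-- Strong duality for the rate balancing problem: the dual optimal value equals `−R*`,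
with the outer maximum and all inner minima attained. -/
theorem stmt_3 {K B I : Type*} [Fintype K] [Fintype B] [Fintype I]
    [Nonempty K] [Nonempty B] [Nonempty I]
    (r : K → B → I → ℝ) (hr : ∀ k b i, 0 ≤ r k b i)
    (β : K → ℝ) (hβpos : ∀ k, 0 < β k) (hβsum : ∑ k, β k = 1)
    (Rstar : ℝ)
    (hRstar : IsGreatest {R : ℝ | ∃ α π, memX α π ∧
        ∀ k, β k * R ≤ ∑ i, ∑ b, α k b i * r k b i} Rstar) :
    (∀ lam : K → ℝ, (∀ k, 0 ≤ lam k) → ∑ k, lam k = 1 →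
        ∃ m, IsLeast {v : ℝ | ∃ α π, memX α π ∧ v = dualObj r β lam α} m) ∧
    IsGreatest {m : ℝ | ∃ lam : K → ℝ, (∀ k, 0 ≤ lam k) ∧ ∑ k, lam k = 1 ∧
        IsLeast {v : ℝ | ∃ α π, memX α π ∧ v = dualObj r β lam α} m} (-Rstar) := by
  classical
  have hub : ∀ (lam : K → ℝ), (∀ k, 0 ≤ lam k) → (∑ k, lam k = 1) →
      ∀ m, IsLeast {v : ℝ | ∃ α π, memX α π ∧ v = dualObj r β lam α} m → m ≤ -Rstar := by
    intro lam hlam hlam1 m hm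
    obtain ⟨αs, πs, hmem, hineq⟩ := hRstar.1
    have h1 : m ≤ dualObj r β lam αs := hm.2 ⟨αs, πs, hmem, rfl⟩
    have h2 : dualObj r β lam αs ≤ -Rstar := by
      rw [dualObj, neg_le_neg_iff]
      have h3 : ∀ k, lam k * Rstar ≤ ∑ b, ∑ i, αs k b i * r k b i * lam k / β k := by
        intro k
        have hb : ∑ b, ∑ i, αs k b i * r k b i * lam k / β k
            = (∑ i, ∑ b, αs k b i * r k b i) * (lam k / β k) := by
          rw [Finset.sum_comm]
          simp only [mul_div_assoc, ← Finset.sum_mul]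
        rw [hb]
        have h5 : 0 ≤ lam k / β k := div_nonneg (hlam k) (hβpos k).le
        have h6 := mul_le_mul_of_nonneg_right (hineq k) h5
        have hx : β k * (lam k / β k) = lam k := by
          rw [← mul_div_assoc]
          exact mul_div_cancel_left₀ _ (hβpos k).ne'
        calc lam k * Rstar = β k * Rstar * (lam k / β k) := by
              rw [mul_comm (β k) Rstar, mul_assoc, hx, mul_comm]
          _ ≤ (∑ i, ∑ b, αs k b i * r k b i) * (lam k / β k) := h6
      calc Rstar = ∑ k, lam k * Rstar := by rw [← Finset.sum_mul, hlam1, one_mul]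
        _ ≤ ∑ k, ∑ b, ∑ i, αs k b i * r k b i * lam k / β k :=
            Finset.sum_le_sum fun k _ => h3 k
    linarith
  refine ⟨fun lam h0 h1 => inner_min r hr β hβpos lam h0, ?_, ?_⟩
  · -- membership
    obtain ⟨lam, hl0, hl1, hkey⟩ := sep_lam r hr β hβpos Rstar hRstar
    obtain ⟨m, hm⟩ := inner_min r hr β hβpos lam hl0
    have hub' := hub lam hl0 hl1 m hm
    have hlb : -Rstar ≤ m := by
      obtain ⟨α0, π0, hmemα, hval⟩ := hm.1
      have h1 := hkey α0 π0 hmemα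
      have h2 : dualObj r β lam α0 = -∑ k, (∑ i, ∑ b, α0 k b i * r k b i) * lam k / β k := by
        rw [dualObj, neg_inj]
        refine Finset.sum_congr rfl fun k _ => ?_
        rw [Finset.sum_comm]
        simp only [mul_div_assoc, ← Finset.sum_mul]
      rw [hval, h2]
      linarith
    have hmR : m = -Rstar := le_antisymm hub' hlb
    exact ⟨lam, hl0, hl1, hmR ▸ hm⟩
  · rintro m ⟨lam, hl0, hl1, hm⟩
    exact hub lam hl0 hl1 m hm
end

section
/- Let r̊_{kbi} ≤ 0 for all k, b, i. For each b ∈ B and i ∈ I choose k̄(b, i) ∈ argmin_{k ∈ K} r̊_{kbi}, and choose ī ∈ argmin_{i ∈ I} ∑_{b ∈ B} r̊_{k̄(b,i) b i}. Define π̄_i = 1 if i = ī and π̄_i = 0 otherwise, and ᾱ_{kbi} = 1 if i = ī and k = k̄(b, ī) and ᾱ_{kbi} = 0 otherwise. Then (ᾱ, π̄) ∈ X and (ᾱ, π̄) minimizes ∑_{k ∈ K} ∑_{b ∈ B} ∑_{i ∈ I} α_{kbi} r̊_{kbi} over all (α, π) ∈ X. -/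
open Finset

/-- Closed-form solution of the inner minimization of the dual of the rate balancing
problem: pooling all resources to the best pattern `ī`, where each BS serves the single
best user, is optimal. -/
theorem stmt_4 {K B I : Type*} [Fintype K] [Fintype B] [Fintype I]
    [Nonempty K] [Nonempty B] [Nonempty I] [DecidableEq K] [DecidableEq I]
    (r : K → B → I → ℝ) (hr : ∀ k b i, r k b i ≤ 0)
    (kbar : B → I → K) (hkbar : ∀ b i k, r (kbar b i) b i ≤ r k b i)
    (ibar : I) (hibar : ∀ i, ∑ b, r (kbar b ibar) b ibar ≤ ∑ b, r (kbar b i) b i)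
    (πbar : I → ℝ) (hπbar : ∀ i, πbar i = if i = ibar then 1 else 0)
    (αbar : K → B → I → ℝ)
    (hαbar : ∀ k b i, αbar k b i = if i = ibar ∧ k = kbar b ibar then 1 else 0) :
    memX αbar πbar ∧
      ∀ α π, memX α π →
        ∑ k, ∑ b, ∑ i, αbar k b i * r k b i ≤ ∑ k, ∑ b, ∑ i, α k b i * r k b i := by
  have hL : ∑ k, ∑ b, ∑ i, αbar k b i * r k b i = ∑ b, r (kbar b ibar) b ibar := by
    rw [Finset.sum_comm]
    refine Finset.sum_congr rfl fun b _ => ?_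
    have : ∀ k i, αbar k b i * r k b i
        = if k = kbar b ibar ∧ i = ibar then r k b i else 0 := by
      intro k i
      rw [hαbar]
      by_cases h1 : i = ibar <;> by_cases h2 : k = kbar b ibar <;> simp [h1, h2]
    simp only [this]
    rw [Finset.sum_comm]
    simp [Finset.sum_ite_eq', ite_and]
  constructor
  · refine ⟨fun k b i => ?_, fun i => ?_, fun b i => ?_, ?_⟩
    · rw [hαbar]; split <;> norm_num
    · rw [hπbar]; split <;> norm_num
    · rw [hπbar]
      by_cases h : i = ibar
      · subst h
        simp [hαbar, Finset.sum_ite_eq']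
      · simp [hαbar, h]
    · simp [hπbar, Finset.sum_ite_eq']
  · rintro α π ⟨hα, hπ, hc, hs⟩
    rw [hL]
    have step1 : ∑ b, r (kbar b ibar) b ibar ≤ ∑ i, π i * ∑ b, r (kbar b i) b i := by
      calc ∑ b, r (kbar b ibar) b ibar
          = ∑ i, π i * ∑ b, r (kbar b ibar) b ibar := by
            rw [← Finset.sum_mul, hs, one_mul]
        _ ≤ ∑ i, π i * ∑ b, r (kbar b i) b i := by
            refine Finset.sum_le_sum fun i _ => ?_
            exact mul_le_mul_of_nonneg_left (hibar i) (hπ i)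
    have step2 : ∀ i b, π i * r (kbar b i) b i ≤ ∑ k, α k b i * r k b i := by
      intro i b
      calc π i * r (kbar b i) b i
          ≤ (∑ k, α k b i) * r (kbar b i) b i := by
            exact mul_le_mul_of_nonpos_right (hc b i) (hr _ _ _)
        _ = ∑ k, α k b i * r (kbar b i) b i := by rw [Finset.sum_mul]
        _ ≤ ∑ k, α k b i * r k b i := by
            refine Finset.sum_le_sum fun k _ => ?_
            exact mul_le_mul_of_nonneg_left (hkbar b i k) (hα k b i)
    calc ∑ b, r (kbar b ibar) b ibar
        ≤ ∑ i, π i * ∑ b, r (kbar b i) b i := step1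
      _ = ∑ i, ∑ b, π i * r (kbar b i) b i := by
          refine Finset.sum_congr rfl fun i _ => by rw [Finset.mul_sum]
      _ ≤ ∑ i, ∑ b, ∑ k, α k b i * r k b i := by
          refine Finset.sum_le_sum fun i _ => Finset.sum_le_sum fun b _ => step2 i b
      _ = ∑ b, ∑ i, ∑ k, α k b i * r k b i := Finset.sum_comm
      _ = ∑ b, ∑ k, ∑ i, α k b i * r k b i :=
          Finset.sum_congr rfl fun b _ => Finset.sum_comm
      _ = ∑ k, ∑ b, ∑ i, α k b i * r k b i := Finset.sum_comm
end

section
/- Let r̊_{kbi} ≤ 0 for all k, b, i. Then the minimum of ∑_{k ∈ K} ∑_{b ∈ B} ∑_{i ∈ I} α_{kbi} r̊_{kbi} over all (α, π) ∈ X equals min_{i ∈ I} ∑_{b ∈ B} min_{k ∈ K} r̊_{kbi}. -/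
open Finset

/-- For nonpositive weights, the minimum of the linear objective over `X` equals
`min_i ∑_b min_k r̊_{kbi}`. -/
theorem stmt_5 {K B I : Type*} [Fintype K] [Fintype B] [Fintype I]
    [Nonempty K] [Nonempty B] [Nonempty I]
    (r : K → B → I → ℝ) (hr : ∀ k b i, r k b i ≤ 0) :
    IsLeast {v : ℝ | ∃ α π, memX α π ∧ v = ∑ k, ∑ b, ∑ i, α k b i * r k b i}
      (univ.inf' univ_nonempty
        (fun i => ∑ b, univ.inf' univ_nonempty (fun k => r k b i))) := by
  classical
  set m : B → I → ℝ := fun b i => univ.inf' univ_nonempty (fun k => r k b i) with hm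
  set f : I → ℝ := fun i => ∑ b, m b i with hf
  have hm0 : ∀ b i, m b i ≤ 0 := fun b i =>
    le_trans (inf'_le _ (mem_univ (Classical.arbitrary K))) (hr _ b i)
  obtain ⟨i0, -, hi0⟩ := exists_mem_eq_inf' (univ_nonempty (α := I)) f
  constructor
  · -- membership: construct optimal α, π
    choose kmin _ hkmin using fun b i =>
      exists_mem_eq_inf' (univ_nonempty (α := K)) (fun k => r k b i)
    refine ⟨fun k b i => (if k = kmin b i0 then (1:ℝ) else 0) * (if i = i0 then 1 else 0),
      fun i => if i = i0 then 1 else 0, ⟨?_, ?_, ?_, ?_⟩, ?_⟩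
    · intro k b i; positivity
    · intro i; positivity
    · intro b i
      rw [← Finset.sum_mul]
      simp only [Finset.sum_ite_eq' univ (kmin b i0) (fun _ => (1:ℝ)), mem_univ, if_true]
      rw [one_mul]
    · simp
    · have h1 : ∀ k b, ∑ i, ((if k = kmin b i0 then (1:ℝ) else 0) * (if i = i0 then 1 else 0))
          * r k b i = (if k = kmin b i0 then (1:ℝ) else 0) * r k b i0 := by
        intro k b
        simp_rw [mul_assoc, ← Finset.mul_sum]
        congr 1
        simp [ite_mul]
      simp_rw [h1]
      rw [Finset.sum_comm]
      have h2 : ∀ b, ∑ k, (if k = kmin b i0 then (1:ℝ) else 0) * r k b i0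
          = r (kmin b i0) b i0 := by
        intro b
        simp [ite_mul]
      simp_rw [h2]
      rw [hi0, hf]
      exact (Finset.sum_congr rfl fun b _ => hkmin b i0)
  · -- lower bound
    rintro v ⟨α, π, ⟨hα, hπ, hsum, htot⟩, rfl⟩
    have key : ∀ b i, π i * m b i ≤ ∑ k, α k b i * r k b i := by
      intro b i
      calc π i * m b i ≤ (∑ k, α k b i) * m b i :=
            mul_le_mul_of_nonpos_right (hsum b i) (hm0 b i)
        _ = ∑ k, α k b i * m b i := Finset.sum_mul _ _ _
        _ ≤ ∑ k, α k b i * r k b i :=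
            Finset.sum_le_sum fun k _ =>
              mul_le_mul_of_nonneg_left (inf'_le _ (mem_univ k)) (hα k b i)
    have h3 : ∑ i, π i * f i ≤ ∑ i, ∑ b, ∑ k, α k b i * r k b i := by
      refine Finset.sum_le_sum fun i _ => ?_
      rw [hf]
      simp only
      rw [Finset.mul_sum]
      exact Finset.sum_le_sum fun b _ => key b i
    have h4 : univ.inf' univ_nonempty f ≤ ∑ i, π i * f i := by
      have : univ.inf' univ_nonempty f = (∑ i, π i) * univ.inf' univ_nonempty f := by
        rw [htot, one_mul]
      rw [this, Finset.sum_mul]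
      exact Finset.sum_le_sum fun i _ =>
        mul_le_mul_of_nonneg_left (inf'_le _ (mem_univ i)) (hπ i)
    have h5 : (∑ i, ∑ b, ∑ k, α k b i * r k b i) = ∑ k, ∑ b, ∑ i, α k b i * r k b i := by
      calc (∑ i, ∑ b, ∑ k, α k b i * r k b i)
          = ∑ b, ∑ i, ∑ k, α k b i * r k b i := Finset.sum_comm
        _ = ∑ b, ∑ k, ∑ i, α k b i * r k b i :=
            Finset.sum_congr rfl fun b _ => Finset.sum_comm
        _ = ∑ k, ∑ b, ∑ i, α k b i * r k b i := Finset.sum_comm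
    calc univ.inf' univ_nonempty f ≤ ∑ i, π i * f i := h4
      _ ≤ ∑ i, ∑ b, ∑ k, α k b i * r k b i := h3
      _ = ∑ k, ∑ b, ∑ i, α k b i * r k b i := h5
end

section
/- Let w_b ∈ ℝ for b ∈ B, μ_k ∈ ℝ for k ∈ K, r_{kbi} ∈ ℝ, and set r̃_{kbi} = w_b − r_{kbi} μ_k. For each b and i choose k̄(b, i) ∈ argmin_{k ∈ K} r̃_{kbi}, and choose ī ∈ argmin_{i ∈ I} ∑_{b ∈ B} min(0, r̃_{k̄(b,i) b i}). Define π̄_i = 1 if i = ī and 0 otherwise, and ᾱ_{kbi} = 1 if i = ī, k = k̄(b, ī) and r̃_{kbi} < 0, and ᾱ_{kbi} = 0 otherwise. Then (ᾱ, π̄) ∈ X, it minimizes ∑_{k,b,i} α_{kbi} r̃_{kbi} over all (α, π) ∈ X, and the minimum value equals min_{i ∈ I} ∑_{b ∈ B} min(0, min_{k ∈ K} r̃_{kbi}). -/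
open Finset

/-- Closed-form solution of the inner minimization of the dual of the reweighted ℓ1
energy-saving problem, with reduced costs `r̃_{kbi} = w_b − r_{kbi} μ_k`. -/
theorem stmt_7 {K B I : Type*} [Fintype K] [Fintype B] [Fintype I]
    [Nonempty K] [Nonempty B] [Nonempty I] [DecidableEq K] [DecidableEq I]
    (w : B → ℝ) (μ : K → ℝ) (r : K → B → I → ℝ)
    (rt : K → B → I → ℝ) (hrt : ∀ k b i, rt k b i = w b - r k b i * μ k)
    (kbar : B → I → K) (hkbar : ∀ b i k, rt (kbar b i) b i ≤ rt k b i)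
    (ibar : I)
    (hibar : ∀ i, ∑ b, min 0 (rt (kbar b ibar) b ibar) ≤ ∑ b, min 0 (rt (kbar b i) b i))
    (πbar : I → ℝ) (hπbar : ∀ i, πbar i = if i = ibar then 1 else 0)
    (αbar : K → B → I → ℝ)
    (hαbar : ∀ k b i, αbar k b i =
      if i = ibar ∧ k = kbar b ibar ∧ rt k b i < 0 then 1 else 0) :
    memX αbar πbar ∧
    (∀ α π, memX α π →
      ∑ k, ∑ b, ∑ i, αbar k b i * rt k b i ≤ ∑ k, ∑ b, ∑ i, α k b i * rt k b i) ∧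
    (∑ k, ∑ b, ∑ i, αbar k b i * rt k b i
      = univ.inf' univ_nonempty
          (fun i => ∑ b, min 0 (univ.inf' univ_nonempty (fun k => rt k b i)))) := by
  set V : ℝ := ∑ b, min 0 (rt (kbar b ibar) b ibar) with hV
  -- value of αbar
  have hval : ∑ k, ∑ b, ∑ i, αbar k b i * rt k b i = V := by
    rw [Finset.sum_comm]
    refine Finset.sum_congr rfl fun b _ => ?_
    have h1 : ∀ k ∈ Finset.univ, ∑ i, αbar k b i * rt k b i
        = αbar k b ibar * rt k b ibar := by
      intro k _
      refine Finset.sum_eq_single ibar (fun i _ hi => ?_) (by simp)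
      simp [hαbar, hi]
    rw [Finset.sum_congr rfl h1,
      Finset.sum_eq_single (kbar b ibar) (fun k _ hk => by simp [hαbar, hk]) (by simp)]
    rw [hαbar]
    by_cases h : rt (kbar b ibar) b ibar < 0
    · simp [h, min_eq_right h.le]
    · simp [h, min_eq_left (not_lt.1 h)]
  have hmem : memX αbar πbar := by
    refine ⟨fun k b i => ?_, fun i => ?_, fun b i => ?_, ?_⟩
    · rw [hαbar]; split <;> norm_num
    · rw [hπbar]; split <;> norm_num
    · rcases eq_or_ne i ibar with h | h
      · subst h
        rw [Finset.sum_eq_single (kbar b i) (fun k _ hk => by simp [hαbar, hk]) (by simp),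
          hαbar, hπbar]
        simp only [if_pos rfl]
        split <;> simp_all <;> norm_num
      · simp [hαbar, hπbar, h]
    · simp [hπbar]
  refine ⟨hmem, ?_, ?_⟩
  · rintro α π ⟨hα, hπ, hc, hs⟩
    rw [hval]
    have key : ∀ i, π i * V ≤ ∑ b, ∑ k, α k b i * rt k b i := by
      intro i
      calc π i * V ≤ π i * ∑ b, min 0 (rt (kbar b i) b i) :=
            mul_le_mul_of_nonneg_left (hibar i) (hπ i)
        _ = ∑ b, π i * min 0 (rt (kbar b i) b i) := Finset.mul_sum _ _ _
        _ ≤ ∑ b, ∑ k, α k b i * rt k b i := by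
            refine Finset.sum_le_sum fun b _ => ?_
            calc π i * min 0 (rt (kbar b i) b i)
                ≤ (∑ k, α k b i) * min 0 (rt (kbar b i) b i) :=
                  mul_le_mul_of_nonpos_right (hc b i) (min_le_left _ _)
              _ = ∑ k, α k b i * min 0 (rt (kbar b i) b i) := Finset.sum_mul _ _ _
              _ ≤ ∑ k, α k b i * rt k b i := by
                  refine Finset.sum_le_sum fun k _ => ?_
                  exact mul_le_mul_of_nonneg_left
                    (le_trans (min_le_right _ _) (hkbar b i k)) (hα k b i)
    have hre : ∑ k, ∑ b, ∑ i, α k b i * rt k b i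
        = ∑ i, ∑ b, ∑ k, α k b i * rt k b i := by
      calc ∑ k, ∑ b, ∑ i, α k b i * rt k b i
          = ∑ b, ∑ k, ∑ i, α k b i * rt k b i := Finset.sum_comm
        _ = ∑ b, ∑ i, ∑ k, α k b i * rt k b i :=
            Finset.sum_congr rfl fun b _ => Finset.sum_comm
        _ = ∑ i, ∑ b, ∑ k, α k b i * rt k b i := Finset.sum_comm
    calc V = (∑ i, π i) * V := by rw [hs, one_mul]
      _ = ∑ i, π i * V := Finset.sum_mul _ _ _
      _ ≤ ∑ i, ∑ b, ∑ k, α k b i * rt k b i := Finset.sum_le_sum fun i _ => key i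
      _ = ∑ k, ∑ b, ∑ i, α k b i * rt k b i := hre.symm
  · rw [hval]
    have hinf : ∀ b i, (univ.inf' univ_nonempty (fun k => rt k b i)) = rt (kbar b i) b i := by
      intro b i
      refine le_antisymm (Finset.inf'_le _ (Finset.mem_univ _)) ?_
      exact Finset.le_inf' _ _ fun k _ => hkbar b i k
    have : (fun i => ∑ b, min 0 (univ.inf' univ_nonempty (fun k => rt k b i)))
        = fun i => ∑ b, min 0 (rt (kbar b i) b i) := by
      funext i; exact Finset.sum_congr rfl fun b _ => by rw [hinf]
    rw [this]
    refine le_antisymm ?_ (Finset.inf'_le _ (Finset.mem_univ ibar))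
    exact Finset.le_inf' _ _ fun i _ => hibar i
end

section
/- For each b ∈ B let K_b ⊆ K be given, and define effective rates r^RE_{kbi} = r_{kbi} if k ∈ K_b and r^RE_{kbi} = 0 otherwise. Consider problem (Q): minimize P^tot over α ≥ 0, π ≥ 0 with ρ_b = ∑_{k ∈ K_b} ∑_{i ∈ I} α_{kbi}, subject to ∑_{i ∈ I} ∑_{b ∈ B} α_{kbi} r^RE_{kbi} ≥ d_k for all k ∈ K, ∑_{k ∈ K_b} α_{kbi} ≤ π_i for all b, i, and ∑_{i ∈ I} π_i = 1; and problem (Q'): the same problem with K_b replaced by K in both the definition of ρ_b and the per-cell resource constraints. Then the infima of (Q) and (Q') are equal, and any optimal solution (α*, π*) of (Q') is feasible for (Q) and attains the infimum of (Q). -/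
open Finset

section RangeExpansion

variable {K B I : Type*} [Fintype K] [Fintype B] [Fintype I]

/-- Feasibility for the energy-saving problem with fixed range-expansion association,
where the per-cell sums run over a given subset `Kb b ⊆ K` of allowed users. -/
def FeasRE (Kb : B → Finset K) (rRE : K → B → I → ℝ) (d : K → ℝ)
    (α : K → B → I → ℝ) (π : I → ℝ) : Prop :=
  (∀ k b i, 0 ≤ α k b i) ∧ (∀ i, 0 ≤ π i) ∧
    (∀ b i, ∑ k ∈ Kb b, α k b i ≤ π i) ∧ (∑ i, π i = 1) ∧
    (∀ k, d k ≤ ∑ i, ∑ b, α k b i * rRE k b i)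

/-- Usage of base station `b`, summed over the allowed users `Kb b`. -/
def ρRE (Kb : B → Finset K) (α : K → B → I → ℝ) (b : B) : ℝ :=
  ∑ k ∈ Kb b, ∑ i, α k b i

/-- Total network power consumption, with usages computed over the allowed users. -/
noncomputable def PtotRE (P q : B → ℝ) (Kb : B → Finset K) (α : K → B → I → ℝ) : ℝ :=
  ∑ b, P b * ((1 - q b) * ρRE Kb α b + q b * (if ρRE Kb α b ≠ 0 then (1 : ℝ) else 0))

end RangeExpansion

section Aux

variable {K B I : Type*} [Fintype K] [Fintype B] [Fintype I]

lemma rhoRE_nonneg (Kb : B → Finset K) (α : K → B → I → ℝ)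
    (hα : ∀ k b i, 0 ≤ α k b i) (b : B) : 0 ≤ ρRE Kb α b :=
  Finset.sum_nonneg fun k _ => Finset.sum_nonneg fun i _ => hα k b i

lemma PtotRE_nonneg (P q : B → ℝ) (hP : ∀ b, 0 < P b) (hq : ∀ b, 0 < q b ∧ q b ≤ 1)
    (Kb : B → Finset K) (α : K → B → I → ℝ) (hα : ∀ k b i, 0 ≤ α k b i) :
    0 ≤ PtotRE P q Kb α := by
  apply Finset.sum_nonneg
  intro b _
  have h1 : 0 ≤ ρRE Kb α b := rhoRE_nonneg Kb α hα b
  have h2 : (0:ℝ) ≤ 1 - q b := by linarith [(hq b).2]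
  apply mul_nonneg (hP b).le
  apply add_nonneg (mul_nonneg h2 h1)
  apply mul_nonneg (hq b).1.le
  split <;> norm_num

lemma PtotRE_mono (P q : B → ℝ) (hP : ∀ b, 0 < P b) (hq : ∀ b, 0 < q b ∧ q b ≤ 1)
    (Kb Kb' : B → Finset K) (hsub : ∀ b, Kb b ⊆ Kb' b)
    (α : K → B → I → ℝ) (hα : ∀ k b i, 0 ≤ α k b i) :
    PtotRE P q Kb α ≤ PtotRE P q Kb' α := by
  apply Finset.sum_le_sum
  intro b _
  have h1 : 0 ≤ ρRE Kb α b := rhoRE_nonneg Kb α hα b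
  have hle : ρRE Kb α b ≤ ρRE Kb' α b :=
    Finset.sum_le_sum_of_subset_of_nonneg (hsub b)
      (fun k _ _ => Finset.sum_nonneg fun i _ => hα k b i)
  apply mul_le_mul_of_nonneg_left _ (hP b).le
  apply add_le_add
  · exact mul_le_mul_of_nonneg_left hle (by linarith [(hq b).2])
  · apply mul_le_mul_of_nonneg_left _ (hq b).1.le
    by_cases h : ρRE Kb α b = 0
    · simp only [h, ne_eq, not_true_eq_false, if_false]
      split <;> norm_num
    · have hpos : 0 < ρRE Kb α b := lt_of_le_of_ne h1 (Ne.symm h)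
      have h' : ρRE Kb' α b ≠ 0 := ne_of_gt (lt_of_lt_of_le hpos hle)
      simp [h, h']

end Aux

/-- Replacing the restricted user sets `K_b` with the full set `K` in the fixed-association
energy-saving problem does not change the optimal value: the infima of (Q) and (Q') agree,
and any optimal solution of (Q') is feasible for (Q) and attains the infimum of (Q). -/
theorem stmt_9 {K B I : Type*} [Fintype K] [Fintype B] [Fintype I]
    [Nonempty K] [Nonempty B] [Nonempty I] [DecidableEq K]
    (P q : B → ℝ) (hP : ∀ b, 0 < P b) (hq : ∀ b, 0 < q b ∧ q b ≤ 1)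
    (r : K → B → I → ℝ) (hr : ∀ k b i, 0 ≤ r k b i) (d : K → ℝ)
    (Kb : B → Finset K)
    (rRE : K → B → I → ℝ) (hrRE : ∀ k b i, rRE k b i = if k ∈ Kb b then r k b i else 0) :
    (sInf {v : ℝ | ∃ α π, FeasRE Kb rRE d α π ∧ v = PtotRE P q Kb α}
      = sInf {v : ℝ | ∃ α π, FeasRE (fun _ => (univ : Finset K)) rRE d α π ∧
          v = PtotRE P q (fun _ => (univ : Finset K)) α}) ∧
    (∀ αs πs, FeasRE (fun _ => (univ : Finset K)) rRE d αs πs →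
      (∀ α π, FeasRE (fun _ => (univ : Finset K)) rRE d α π →
        PtotRE P q (fun _ => (univ : Finset K)) αs
          ≤ PtotRE P q (fun _ => (univ : Finset K)) α) →
      FeasRE Kb rRE d αs πs ∧
        PtotRE P q Kb αs
          = sInf {v : ℝ | ∃ α π, FeasRE Kb rRE d α π ∧ v = PtotRE P q Kb α}) := by
  set S := {v : ℝ | ∃ α π, FeasRE Kb rRE d α π ∧ v = PtotRE P q Kb α} with hSdef
  set T := {v : ℝ | ∃ α π, FeasRE (fun _ => (univ : Finset K)) rRE d α π ∧
      v = PtotRE P q (fun _ => (univ : Finset K)) α} with hTdef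
  have hbddS : BddBelow S := by
    refine ⟨0, ?_⟩
    rintro v ⟨α, π, hf, rfl⟩
    exact PtotRE_nonneg P q hP hq Kb α hf.1
  have hbddT : BddBelow T := by
    refine ⟨0, ?_⟩
    rintro v ⟨α, π, hf, rfl⟩
    exact PtotRE_nonneg P q hP hq _ α hf.1
  -- any (Q')-feasible point is (Q)-feasible
  have hmap1 : ∀ α π, FeasRE (fun _ => (univ : Finset K)) rRE d α π →
      FeasRE Kb rRE d α π := by
    rintro α π ⟨hα, hπ, hc, hπ1, hd⟩
    refine ⟨hα, hπ, fun b i => ?_, hπ1, hd⟩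
    refine le_trans ?_ (hc b i)
    exact Finset.sum_le_sum_of_subset_of_nonneg (Finset.subset_univ _)
      (fun k _ _ => hα k b i)
  -- any (Q)-feasible point can be zeroed outside `Kb` to give a (Q')-feasible
  -- point with the same objective value
  have hmap2 : ∀ α π, FeasRE Kb rRE d α π →
      ∃ α', FeasRE (fun _ => (univ : Finset K)) rRE d α' π ∧
        PtotRE P q (fun _ => (univ : Finset K)) α' = PtotRE P q Kb α := by
    rintro α π ⟨hα, hπ, hc, hπ1, hd⟩
    refine ⟨fun k b i => if k ∈ Kb b then α k b i else 0, ?_, ?_⟩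
    · refine ⟨fun k b i => by by_cases hk : k ∈ Kb b <;> simp [hk, hα], hπ, ?_, hπ1, ?_⟩
      · intro b i
        refine le_trans (le_of_eq ?_) (hc b i)
        rw [Finset.sum_ite_mem, Finset.univ_inter]
      · intro k
        refine le_trans (hd k) (le_of_eq ?_)
        refine Finset.sum_congr rfl fun i _ => Finset.sum_congr rfl fun b _ => ?_
        by_cases hk : k ∈ Kb b
        · simp [hk]
        · simp [hk, hrRE]
    · have hρ : ∀ b, ρRE (fun _ => (univ : Finset K))
          (fun k b i => if k ∈ Kb b then α k b i else 0) b = ρRE Kb α b := by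
        intro b
        have hsum : ∀ k, (∑ i, (if k ∈ Kb b then α k b i else 0))
            = if k ∈ Kb b then ∑ i, α k b i else 0 := fun k => by split <;> simp
        simp only [ρRE, hsum, Finset.sum_ite_mem, Finset.univ_inter]
      unfold PtotRE
      exact Finset.sum_congr rfl fun b _ => by rw [hρ b]
  have hsub : ∀ b, Kb b ⊆ (univ : Finset K) := fun b => Finset.subset_univ _
  constructor
  · by_cases hT : T.Nonempty
    · -- S is nonempty as well
      obtain ⟨w, α₀, π₀, hf₀, hw₀⟩ := id hT
      have hSne : S.Nonempty := ⟨PtotRE P q Kb α₀, α₀, π₀, hmap1 α₀ π₀ hf₀, rfl⟩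
      apply le_antisymm
      · apply le_csInf hT
        rintro v ⟨α, π, hf, rfl⟩
        refine le_trans (csInf_le hbddS ⟨α, π, hmap1 α π hf, rfl⟩) ?_
        exact PtotRE_mono P q hP hq Kb _ hsub α hf.1
      · apply le_csInf hSne
        rintro v ⟨α, π, hf, rfl⟩
        obtain ⟨α', hf', heq⟩ := hmap2 α π hf
        exact heq ▸ csInf_le hbddT ⟨α', π, hf', rfl⟩
    · have hTe : T = ∅ := Set.not_nonempty_iff_eq_empty.mp hT
      have hSe : S = ∅ := by
        rw [Set.eq_empty_iff_forall_notMem]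
        rintro v ⟨α, π, hf, rfl⟩
        obtain ⟨α', hf', heq⟩ := hmap2 α π hf
        exact hT ⟨PtotRE P q (fun _ => (univ : Finset K)) α', α', π, hf', rfl⟩
      rw [hSe, hTe]
  · intro αs πs hfs hopt
    have hfeasKb : FeasRE Kb rRE d αs πs := hmap1 αs πs hfs
    refine ⟨hfeasKb, ?_⟩
    have hmem : PtotRE P q Kb αs ∈ S := ⟨αs, πs, hfeasKb, rfl⟩
    apply le_antisymm
    · apply le_csInf ⟨_, hmem⟩
      rintro v ⟨α, π, hf, rfl⟩
      obtain ⟨α', hf', heq⟩ := hmap2 α π hf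
      calc PtotRE P q Kb αs
          ≤ PtotRE P q (fun _ => (univ : Finset K)) αs :=
            PtotRE_mono P q hP hq Kb _ hsub αs hfs.1
        _ ≤ PtotRE P q (fun _ => (univ : Finset K)) α' := hopt α' π hf'
        _ = PtotRE P q Kb α := heq
    · exact csInf_le hbddS hmem
end

section
/- Fix ε > 0, P_b > 0 and q_b ∈ (0,1] for each b ∈ B, and let Y be the set of (α, π) ∈ X satisfying ∑_{i ∈ I} ∑_{b ∈ B} α_{kbi} r_{kbi} ≥ d_k for all k ∈ K. Define F(α) = ∑_{b ∈ B} P_b [ (1 − q_b) ρ_b(α) + q_b log(ε + ρ_b(α)) / log(1 + ε^{−1}) ]. Given (α⁰, π⁰) ∈ Y, define the weights w_b = (1 − q_b) P_b + q_b P_b / ( log(1 + ε^{−1}) (ε + ρ_b(α⁰)) ). If (α⁺, π⁺) minimizes ∑_{b ∈ B} w_b ρ_b(α) over Y, then F(α⁺) ≤ F(α⁰). -/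
open Finset

/-- One step of the reweighted ℓ1 (convex–concave) procedure does not increase the smooth
surrogate objective `F`. -/
theorem stmt_10 {K B I : Type*} [Fintype K] [Fintype B] [Fintype I]
    [Nonempty K] [Nonempty B] [Nonempty I]
    (ε : ℝ) (hε : 0 < ε)
    (P q : B → ℝ) (hP : ∀ b, 0 < P b) (hq : ∀ b, 0 < q b ∧ q b ≤ 1)
    (r : K → B → I → ℝ) (hr : ∀ k b i, 0 ≤ r k b i) (d : K → ℝ)
    (F : (K → B → I → ℝ) → ℝ)
    (hF : ∀ α, F α = ∑ b, P b * ((1 - q b) * ρ α b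
        + q b * Real.log (ε + ρ α b) / Real.log (1 + ε⁻¹)))
    (α0 : K → B → I → ℝ) (π0 : I → ℝ)
    (h0 : memX α0 π0 ∧ ∀ k, d k ≤ ∑ i, ∑ b, α0 k b i * r k b i)
    (w : B → ℝ)
    (hw : ∀ b, w b = (1 - q b) * P b
        + q b * P b / (Real.log (1 + ε⁻¹) * (ε + ρ α0 b)))
    (αp : K → B → I → ℝ) (πp : I → ℝ)
    (hp : memX αp πp ∧ ∀ k, d k ≤ ∑ i, ∑ b, αp k b i * r k b i)
    (hmin : ∀ α π, memX α π → (∀ k, d k ≤ ∑ i, ∑ b, α k b i * r k b i) →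
      ∑ b, w b * ρ αp b ≤ ∑ b, w b * ρ α b) :
    F αp ≤ F α0 := by

  have hL : 0 < Real.log (1 + ε⁻¹) := by
    apply Real.log_pos; linarith [inv_pos.mpr hε]
  have hρ0 : ∀ b, 0 ≤ ρ α0 b := fun b =>
    Finset.sum_nonneg fun k _ => Finset.sum_nonneg fun i _ => h0.1.1 k b i
  have hρp : ∀ b, 0 ≤ ρ αp b := fun b =>
    Finset.sum_nonneg fun k _ => Finset.sum_nonneg fun i _ => hp.1.1 k b i
  have hsum := hmin α0 π0 h0.1 h0.2
  rw [hF, hF]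
  have key : ∀ b, P b * ((1 - q b) * ρ αp b
      + q b * Real.log (ε + ρ αp b) / Real.log (1 + ε⁻¹))
      ≤ P b * ((1 - q b) * ρ α0 b
      + q b * Real.log (ε + ρ α0 b) / Real.log (1 + ε⁻¹))
      + (w b * ρ αp b - w b * ρ α0 b) := by
    intro b
    have hx : 0 < ε + ρ α0 b := by linarith [hρ0 b]
    have hy : 0 < ε + ρ αp b := by linarith [hρp b]
    have hlog : Real.log (ε + ρ αp b) - Real.log (ε + ρ α0 b)
        ≤ (ρ αp b - ρ α0 b) / (ε + ρ α0 b) := by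
      have h1 := Real.log_le_sub_one_of_pos (div_pos hy hx)
      rw [Real.log_div hy.ne' hx.ne'] at h1
      have e : (ε + ρ αp b) / (ε + ρ α0 b) - 1 = (ρ αp b - ρ α0 b) / (ε + ρ α0 b) := by
        field_simp
        ring
      rw [e] at h1; exact h1
    have hc : 0 ≤ q b * P b / Real.log (1 + ε⁻¹) :=
      div_nonneg (mul_nonneg (hq b).1.le (hP b).le) hL.le
    rw [hw b]
    have key2 := mul_le_mul_of_nonneg_left hlog hc
    have e1 : P b * ((1 - q b) * ρ αp b
          + q b * Real.log (ε + ρ αp b) / Real.log (1 + ε⁻¹))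
        - (P b * ((1 - q b) * ρ α0 b
          + q b * Real.log (ε + ρ α0 b) / Real.log (1 + ε⁻¹))
        + (((1 - q b) * P b + q b * P b / (Real.log (1 + ε⁻¹) * (ε + ρ α0 b))) * ρ αp b
          - ((1 - q b) * P b + q b * P b / (Real.log (1 + ε⁻¹) * (ε + ρ α0 b))) * ρ α0 b))
        = q b * P b / Real.log (1 + ε⁻¹)
            * (Real.log (ε + ρ αp b) - Real.log (ε + ρ α0 b))
          - q b * P b / Real.log (1 + ε⁻¹) * ((ρ αp b - ρ α0 b) / (ε + ρ α0 b)) := by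
      have hxne := hx.ne'
      have hLne := hL.ne'
      field_simp
      ring
    linarith [key2, e1]
  calc ∑ b, P b * ((1 - q b) * ρ αp b
        + q b * Real.log (ε + ρ αp b) / Real.log (1 + ε⁻¹))
      ≤ ∑ b, (P b * ((1 - q b) * ρ α0 b
        + q b * Real.log (ε + ρ α0 b) / Real.log (1 + ε⁻¹))
        + (w b * ρ αp b - w b * ρ α0 b)) := Finset.sum_le_sum fun b _ => key b
    _ ≤ ∑ b, P b * ((1 - q b) * ρ α0 b
        + q b * Real.log (ε + ρ α0 b) / Real.log (1 + ε⁻¹)) := by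
        rw [Finset.sum_add_distrib]
        have : ∑ b, (w b * ρ αp b - w b * ρ α0 b) ≤ 0 := by
          rw [Finset.sum_sub_distrib]; linarith [hsum]
        linarith
end

section
/- Fix ε > 0, P_b > 0 and q_b ∈ (0,1] for each b ∈ B, let Y be the set of (α, π) ∈ X satisfying ∑_{i ∈ I} ∑_{b ∈ B} α_{kbi} r_{kbi} ≥ d_k for all k ∈ K, assume Y is nonempty, and define F(α) = ∑_{b ∈ B} P_b [ (1 − q_b) ρ_b(α) + q_b log(ε + ρ_b(α)) / log(1 + ε^{−1}) ] and, for any α with ρ_b(α) ≥ 0, the weights w_b(α) = (1 − q_b) P_b + q_b P_b / ( log(1 + ε^{−1}) (ε + ρ_b(α)) ). Let ((α^{(t)}, π^{(t)}))_{t ≥ 0} be a sequence in Y such that for every t ≥ 1, (α^{(t)}, π^{(t)}) minimizes ∑_{b ∈ B} w_b(α^{(t−1)}) ρ_b(α) over Y. Then every limit point (ᾱ, π̄) of this sequence satisfies the first-order stationarity condition ∑_{b ∈ B} w_b(ᾱ) ( ρ_b(α) − ρ_b(ᾱ) ) ≥ 0 for all (α, π) ∈ Y. -/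
open Finset

/-- Convergence of the convex–concave (reweighted ℓ1) procedure: every limit point of the
iterates satisfies the first-order stationarity condition for the smooth surrogate of the
ℓ0 power objective over the feasible set `Y`. -/
theorem stmt_11 {K B I : Type*} [Fintype K] [Fintype B] [Fintype I]
    [Nonempty K] [Nonempty B] [Nonempty I]
    (ε : ℝ) (hε : 0 < ε)
    (P q : B → ℝ) (hP : ∀ b, 0 < P b) (hq : ∀ b, 0 < q b ∧ q b ≤ 1)
    (r : K → B → I → ℝ) (hr : ∀ k b i, 0 ≤ r k b i) (d : K → ℝ)
    (inY : (K → B → I → ℝ) → (I → ℝ) → Prop)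
    (hinY : ∀ α π, inY α π ↔
      memX α π ∧ ∀ k, d k ≤ ∑ i, ∑ b, α k b i * r k b i)
    (hYne : ∃ α π, inY α π)
    (w : (K → B → I → ℝ) → B → ℝ)
    (hw : ∀ α b, w α b = (1 - q b) * P b
        + q b * P b / (Real.log (1 + ε⁻¹) * (ε + ρ α b)))
    (αseq : ℕ → (K → B → I → ℝ)) (πseq : ℕ → (I → ℝ))
    (hseqY : ∀ t, inY (αseq t) (πseq t))
    (hstep : ∀ t : ℕ, 1 ≤ t →
      ∀ α π, inY α π →
        ∑ b, w (αseq (t - 1)) b * ρ (αseq t) b ≤ ∑ b, w (αseq (t - 1)) b * ρ α b)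
    (αbar : K → B → I → ℝ) (πbar : I → ℝ)
    (φ : ℕ → ℕ) (hφ : StrictMono φ)
    (hlim : Filter.Tendsto (fun n => (αseq (φ n), πseq (φ n)))
      Filter.atTop (nhds (αbar, πbar))) :
    ∀ α π, inY α π → 0 ≤ ∑ b, w αbar b * (ρ α b - ρ αbar b) := by

  intro α π hαπ
  have hL : 0 < Real.log (1 + ε⁻¹) := Real.log_pos (by nlinarith [inv_pos.mpr hε])
  have hρnn : ∀ (a : K → B → I → ℝ) (p : I → ℝ), inY a p → ∀ b, 0 ≤ ρ a b := by
    intro a p hp b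
    have h := ((hinY a p).mp hp).1.1
    exact Finset.sum_nonneg fun k _ => Finset.sum_nonneg fun i _ => h k b i
  set L := Real.log (1 + ε⁻¹) with hLdef
  set F : (K → B → I → ℝ) → ℝ :=
    fun a => ∑ b, P b * ((1 - q b) * ρ a b + q b * Real.log (ε + ρ a b) / L) with hFdef
  -- concavity of log
  have hlog : ∀ x y : ℝ, 0 ≤ x → 0 ≤ y →
      Real.log (ε + y) ≤ Real.log (ε + x) + (y - x) / (ε + x) := by
    intro x y hx hy
    have hx' : 0 < ε + x := by linarith
    have hy' : 0 < ε + y := by linarith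
    have h1 : Real.log ((ε + y) / (ε + x)) ≤ (ε + y) / (ε + x) - 1 :=
      Real.log_le_sub_one_of_pos (by positivity)
    rw [Real.log_div hy'.ne' hx'.ne'] at h1
    have heq : (ε + y) / (ε + x) - 1 = (y - x) / (ε + x) := by field_simp; ring
    rw [heq] at h1
    linarith
  -- concavity of F (linearization is an upper bound)
  have hconc : ∀ a a' : K → B → I → ℝ, (∀ b, 0 ≤ ρ a b) → (∀ b, 0 ≤ ρ a' b) →
      F a' ≤ F a + ∑ b, w a b * (ρ a' b - ρ a b) := by
    intro a a' ha ha'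
    have hb : ∀ b : B, P b * ((1 - q b) * ρ a' b + q b * Real.log (ε + ρ a' b) / L)
        ≤ P b * ((1 - q b) * ρ a b + q b * Real.log (ε + ρ a b) / L)
          + w a b * (ρ a' b - ρ a b) := by
      intro b
      have hx' : 0 < ε + ρ a b := by linarith [ha b]
      have h1 := hlog (ρ a b) (ρ a' b) (ha b) (ha' b)
      have hq1 := (hq b).1
      have hPb := hP b
      have h2 : q b * P b / L * Real.log (ε + ρ a' b)
          ≤ q b * P b / L * (Real.log (ε + ρ a b) + (ρ a' b - ρ a b) / (ε + ρ a b)) := by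
        apply mul_le_mul_of_nonneg_left h1
        positivity
      rw [hw]
      have heq : P b * ((1 - q b) * ρ a b + q b * Real.log (ε + ρ a b) / L)
            + ((1 - q b) * P b + q b * P b / (L * (ε + ρ a b))) * (ρ a' b - ρ a b)
          = (1 - q b) * P b * ρ a' b
            + q b * P b / L * (Real.log (ε + ρ a b) + (ρ a' b - ρ a b) / (ε + ρ a b)) := by
        field_simp
        ring
      rw [heq]
      have hmain : P b * ((1 - q b) * ρ a' b + q b * Real.log (ε + ρ a' b) / L)
          = (1 - q b) * P b * ρ a' b + q b * P b / L * Real.log (ε + ρ a' b) := by ring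
      rw [hmain]
      linarith
    calc F a' ≤ ∑ b, (P b * ((1 - q b) * ρ a b + q b * Real.log (ε + ρ a b) / L)
          + w a b * (ρ a' b - ρ a b)) := Finset.sum_le_sum fun b _ => hb b
      _ = F a + ∑ b, w a b * (ρ a' b - ρ a b) := by
          rw [Finset.sum_add_distrib]
  -- F decreases along the iterates
  have hanti : Antitone fun t => F (αseq t) := by
    apply antitone_nat_of_succ_le
    intro n
    have h1 := hconc (αseq n) (αseq (n+1)) (hρnn _ _ (hseqY n)) (hρnn _ _ (hseqY (n+1)))
    have h2 := hstep (n+1) (Nat.le_add_left 1 n) (αseq n) (πseq n) (hseqY n)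
    simp only [Nat.add_sub_cancel] at h2
    simp only [mul_sub, Finset.sum_sub_distrib] at h1
    show F (αseq (n+1)) ≤ F (αseq n)
    linarith
  -- continuity / limits
  have hlim1 : Filter.Tendsto (fun n => αseq (φ n)) Filter.atTop (nhds αbar) :=
    (continuous_fst.tendsto _).comp hlim
  have hρc : ∀ b : B, Continuous fun a : K → B → I → ℝ => ρ a b := by
    intro b
    unfold ρ
    exact continuous_finset_sum _ fun k _ => continuous_finset_sum _ fun i _ =>
      (continuous_apply i).comp ((continuous_apply b).comp (continuous_apply k))
  have hρt : ∀ b, Filter.Tendsto (fun n => ρ (αseq (φ n)) b) Filter.atTop (nhds (ρ αbar b)) :=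
    fun b => ((hρc b).tendsto _).comp hlim1
  have hρbar0 : ∀ b, 0 ≤ ρ αbar b := fun b =>
    ge_of_tendsto' (hρt b) fun n => hρnn _ _ (hseqY (φ n)) b
  have hwt : ∀ b, Filter.Tendsto (fun n => w (αseq (φ n)) b) Filter.atTop (nhds (w αbar b)) := by
    intro b
    simp only [hw]
    have hden : L * (ε + ρ αbar b) ≠ 0 := (mul_pos hL (by linarith [hρbar0 b])).ne'
    exact tendsto_const_nhds.add
      (Filter.Tendsto.div tendsto_const_nhds
        (tendsto_const_nhds.mul (tendsto_const_nhds.add (hρt b))) hden)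
  have hlogt : ∀ b, Filter.Tendsto (fun n => Real.log (ε + ρ (αseq (φ n)) b)) Filter.atTop
      (nhds (Real.log (ε + ρ αbar b))) := by
    intro b
    have hne : ε + ρ αbar b ≠ 0 := by have := hρbar0 b; positivity
    exact (Real.continuousAt_log hne).tendsto.comp (tendsto_const_nhds.add (hρt b))
  have hFt : Filter.Tendsto (fun n => F (αseq (φ n))) Filter.atTop (nhds (F αbar)) := by
    simp only [hFdef]
    exact tendsto_finset_sum _ fun b _ => tendsto_const_nhds.mul
      ((tendsto_const_nhds.mul (hρt b)).add ((tendsto_const_nhds.mul (hlogt b)).div_const L))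
  have hFtfull : Filter.Tendsto (fun t => F (αseq t)) Filter.atTop (nhds (F αbar)) := by
    rcases tendsto_of_antitone hanti with h | ⟨l, h⟩
    · exact absurd (h.comp hφ.tendsto_atTop) (not_tendsto_atBot_of_tendsto_nhds hFt)
    · have hl : l = F αbar := tendsto_nhds_unique (h.comp hφ.tendsto_atTop) hFt
      exact hl ▸ h
  have hshift : Filter.Tendsto (fun n => φ n + 1) Filter.atTop Filter.atTop :=
    Filter.tendsto_atTop_mono (fun n => Nat.le_succ_of_le (hφ.id_le n)) Filter.tendsto_id
  have hFnext : Filter.Tendsto (fun n => F (αseq (φ n + 1))) Filter.atTop (nhds (F αbar)) :=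
    hFtfull.comp hshift
  -- key inequality along the subsequence
  have hkey : ∀ n, ∑ b, w (αseq (φ n)) b * ρ (αseq (φ n)) b
      ≤ F (αseq (φ n)) - F (αseq (φ n + 1)) + ∑ b, w (αseq (φ n)) b * ρ α b := by
    intro n
    have h1 := hconc (αseq (φ n)) (αseq (φ n + 1)) (hρnn _ _ (hseqY _)) (hρnn _ _ (hseqY _))
    have h2 := hstep (φ n + 1) (Nat.le_add_left 1 _) α π hαπ
    simp only [Nat.add_sub_cancel] at h2
    simp only [mul_sub, Finset.sum_sub_distrib] at h1
    linarith
  have hSlim : Filter.Tendsto (fun n => ∑ b, w (αseq (φ n)) b * ρ (αseq (φ n)) b)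
      Filter.atTop (nhds (∑ b, w αbar b * ρ αbar b)) :=
    tendsto_finset_sum _ fun b _ => (hwt b).mul (hρt b)
  have hUlim : Filter.Tendsto
      (fun n => F (αseq (φ n)) - F (αseq (φ n + 1)) + ∑ b, w (αseq (φ n)) b * ρ α b)
      Filter.atTop (nhds (F αbar - F αbar + ∑ b, w αbar b * ρ α b)) :=
    (hFt.sub hFnext).add (tendsto_finset_sum _ fun b _ => (hwt b).mul tendsto_const_nhds)
  have hfin := le_of_tendsto_of_tendsto' hSlim hUlim hkey
  simp only [sub_self, zero_add] at hfin
  simp only [mul_sub, Finset.sum_sub_distrib]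
  linarith
end

section
/- Consider the reformulated energy-saving problem: minimize ∑_{b ∈ B} P_b [(1 − q_b) ρ'_b + q_b · 𝟙(ρ'_b ≠ 0)] over θ : K × B × I → ℝ and π : I → ℝ with θ_{kbi} ≥ 0, ∑_{k ∈ K} θ_{kbi} ≤ 1 for all b, i, π_i ≥ 0, ∑_{i ∈ I} π_i = 1, and ∑_{i ∈ I} π_i ∑_{b ∈ B} θ_{kbi} r_{kbi} ≥ d_k for all k ∈ K, where ρ'_b = ∑_{i ∈ I} π_i ∑_{k ∈ K} θ_{kbi}. Assume r_{kbi} ≥ 0 and d_k ≥ 0 for all k, b, i. If this problem admits an optimal solution, then it admits an optimal solution at which every rate constraint is tight, i.e. ∑_{i ∈ I} π_i ∑_{b ∈ B} θ_{kbi} r_{kbi} = d_k for all k ∈ K. -/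
open Finset

section Reformulated

variable {K B I : Type*} [Fintype K] [Fintype B] [Fintype I]

/-- Usage of base station `b` in the reformulated energy-saving problem. -/
def ρ' (θ : K → B → I → ℝ) (π : I → ℝ) (b : B) : ℝ :=
  ∑ i, π i * ∑ k, θ k b i

/-- Total network power in the reformulated energy-saving problem. -/
noncomputable def Ptot' (P q : B → ℝ) (θ : K → B → I → ℝ) (π : I → ℝ) : ℝ :=
  ∑ b, P b * ((1 - q b) * ρ' θ π b + q b * (if ρ' θ π b ≠ 0 then (1 : ℝ) else 0))

/-- Feasibility for the reformulated energy-saving problem. -/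
def FeasP' (r : K → B → I → ℝ) (d : K → ℝ) (θ : K → B → I → ℝ) (π : I → ℝ) : Prop :=
  (∀ k b i, 0 ≤ θ k b i) ∧ (∀ b i, ∑ k, θ k b i ≤ 1) ∧
    (∀ i, 0 ≤ π i) ∧ (∑ i, π i = 1) ∧
    (∀ k, d k ≤ ∑ i, π i * ∑ b, θ k b i * r k b i)

end Reformulated

/-- If the reformulated energy-saving problem admits an optimal solution, then it admits an
optimal solution at which every rate constraint is tight. -/
theorem stmt_15 {K B I : Type*} [Fintype K] [Fintype B] [Fintype I]
    [Nonempty K] [Nonempty B] [Nonempty I]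
    (P q : B → ℝ) (hP : ∀ b, 0 < P b) (hq : ∀ b, 0 < q b ∧ q b ≤ 1)
    (r : K → B → I → ℝ) (hr : ∀ k b i, 0 ≤ r k b i)
    (d : K → ℝ) (hd : ∀ k, 0 ≤ d k)
    (hopt : ∃ θ π, FeasP' r d θ π ∧
      ∀ θ' π', FeasP' r d θ' π' → Ptot' P q θ π ≤ Ptot' P q θ' π') :
    ∃ θ π, FeasP' r d θ π ∧
      (∀ θ' π', FeasP' r d θ' π' → Ptot' P q θ π ≤ Ptot' P q θ' π') ∧
      (∀ k, ∑ i, π i * ∑ b, θ k b i * r k b i = d k) := by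
  obtain ⟨θ, π, ⟨hθ0, hθ1, hπ0, hπ1, hrate⟩, hopt⟩ := hopt
  set S : K → ℝ := fun k => ∑ i, π i * ∑ b, θ k b i * r k b i with hS
  have hS0 : ∀ k, 0 ≤ S k := fun k => le_trans (hd k) (hrate k)
  set c : K → ℝ := fun k => if S k = 0 then 0 else d k / S k with hc
  have hc0 : ∀ k, 0 ≤ c k := by
    intro k
    simp only [hc]
    split_ifs with h
    · exact le_refl 0
    · exact div_nonneg (hd k) (hS0 k)
  have hc1 : ∀ k, c k ≤ 1 := by
    intro k
    simp only [hc]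
    split_ifs with h
    · norm_num
    · exact div_le_one_of_le₀ (hrate k) (hS0 k)
  set θ2 : K → B → I → ℝ := fun k b i => c k * θ k b i with hθ2
  have key : ∀ k, ∑ i, π i * ∑ b, θ2 k b i * r k b i = c k * S k := by
    intro k
    rw [hS, Finset.mul_sum]
    refine Finset.sum_congr rfl fun i _ => ?_
    simp only [hθ2, mul_assoc, ← Finset.mul_sum]
    ring
  have tight : ∀ k, ∑ i, π i * ∑ b, θ2 k b i * r k b i = d k := by
    intro k
    rw [key k]
    simp only [hc]
    split_ifs with h
    · rw [h, mul_zero]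
      exact (le_antisymm (h ▸ hrate k) (hd k)).symm
    · exact div_mul_cancel₀ (d k) h
  have feas2 : FeasP' r d θ2 π := by
    refine ⟨fun k b i => mul_nonneg (hc0 k) (hθ0 k b i), fun b i => ?_, hπ0, hπ1,
      fun k => (tight k).ge⟩
    calc ∑ k, θ2 k b i ≤ ∑ k, θ k b i := by
          refine Finset.sum_le_sum fun k _ => ?_
          exact mul_le_of_le_one_left (hθ0 k b i) (hc1 k)
      _ ≤ 1 := hθ1 b i
  have hρ2nn : ∀ b, 0 ≤ ρ' θ2 π b := by
    intro b
    refine Finset.sum_nonneg fun i _ => mul_nonneg (hπ0 i) ?_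
    exact Finset.sum_nonneg fun k _ => mul_nonneg (hc0 k) (hθ0 k b i)
  have hρle : ∀ b, ρ' θ2 π b ≤ ρ' θ π b := by
    intro b
    refine Finset.sum_le_sum fun i _ => mul_le_mul_of_nonneg_left ?_ (hπ0 i)
    refine Finset.sum_le_sum fun k _ => ?_
    exact mul_le_of_le_one_left (hθ0 k b i) (hc1 k)
  have hPtot : Ptot' P q θ2 π ≤ Ptot' P q θ π := by
    unfold Ptot'
    refine Finset.sum_le_sum fun b _ => ?_
    refine mul_le_mul_of_nonneg_left (add_le_add ?_ ?_) (hP b).le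
    · exact mul_le_mul_of_nonneg_left (hρle b) (by linarith [(hq b).2])
    · refine mul_le_mul_of_nonneg_left ?_ (hq b).1.le
      split_ifs with h1 h2
      · exact le_refl 1
      · exact absurd (le_antisymm ((not_not.mp h2) ▸ hρle b) (hρ2nn b)) h1
      · norm_num
      · exact le_refl 0
  exact ⟨θ2, π, feas2, fun θ' π' h => le_trans hPtot (hopt θ' π' h), tight⟩
end
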